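/- arXiv:2302.07498 — 9 statements merged into one kernel-verified Lean document; each statement's English description precedes it below -/
import Mathlib

section
/- Let S be a real 4×4 symplectic matrix (i.e., S Ω Sᵀ = Ω) and let V = S Sᵀ with entries (a_{ij}). If a_{12} = a_{14} = a_{34} = 0, then a_{23} = 0. -/
open Matrix

/-- The standard symplectic form of two bosonic modes. -/
def Omega : Matrix (Fin 4) (Fin 4) ℝ :=
  !![0, 1, 0, 0;
     -1, 0, 0, 0;
     0, 0, 0, 1;
     0, 0, -1, 0]

lemma omega_neg_sq : (-Omega) * Omega = 1 := by
  ext i j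
  fin_cases i <;> fin_cases j <;>
    simp [Omega, Matrix.mul_apply, Fin.sum_univ_four, Matrix.one_apply, Matrix.vecHead, Matrix.vecTail]

lemma omega_sq' : Omega * (-Omega) = 1 := by
  ext i j
  fin_cases i <;> fin_cases j <;>
    simp [Omega, Matrix.mul_apply, Fin.sum_univ_four, Matrix.one_apply, Matrix.vecHead, Matrix.vecTail]

set_option maxHeartbeats 1000000 in
/-- If `S` is a real 4×4 symplectic matrix and `V = S Sᵀ` satisfies
`a₁₂ = a₁₄ = a₃₄ = 0`, then `a₂₃ = 0`. -/
theorem stmt_0 (S : Matrix (Fin 4) (Fin 4) ℝ) (hS : S * Omega * Sᵀ = Omega)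
    (V : Matrix (Fin 4) (Fin 4) ℝ) (hV : V = S * Sᵀ)
    (h12 : V 0 1 = 0) (h14 : V 0 3 = 0) (h34 : V 2 3 = 0) :
    V 1 2 = 0 := by
  -- Sᵀ is also symplectic
  have hA : S * (Omega * Sᵀ * (-Omega)) = 1 := by
    have h : S * (Omega * Sᵀ * (-Omega)) = (S * Omega * Sᵀ) * (-Omega) := by
      noncomm_ring
    rw [h, hS, omega_sq']
  have hA' : (Omega * Sᵀ * (-Omega)) * S = 1 := mul_eq_one_comm.mp hA
  have hST : Sᵀ * Omega * S = Omega := by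
    have h2 : (-Omega) * ((Omega * Sᵀ * (-Omega)) * S) = -Omega := by
      rw [hA', Matrix.mul_one]
    have h3 : (-Omega) * ((Omega * Sᵀ * (-Omega)) * S)
        = ((-Omega) * Omega) * (Sᵀ * (-Omega) * S) := by noncomm_ring
    rw [h3, omega_neg_sq, Matrix.one_mul] at h2
    have h4 : Sᵀ * (-Omega) * S = -(Sᵀ * Omega * S) := by noncomm_ring
    rw [h4] at h2
    exact neg_injective h2
  have hVOV : V * Omega * V = Omega := by
    rw [hV]
    have h : (S * Sᵀ) * Omega * (S * Sᵀ) = S * (Sᵀ * Omega * S) * Sᵀ := by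
      noncomm_ring
    rw [h, hST, hS]
  -- the symmetry of V
  have hsym : V 3 2 = 0 := by
    rw [hV] at h34 ⊢
    simp only [Matrix.mul_apply, Matrix.transpose_apply, Fin.sum_univ_four] at h34 ⊢
    linarith [h34]
  -- entry (0,2) of V Ω V = Ω
  have h02 := congrFun (congrFun hVOV 0) 2
  simp [Matrix.mul_apply, Fin.sum_univ_four, Omega, Matrix.vecHead, Matrix.vecTail] at h02
  rw [h12, h14, hsym] at h02
  -- h02 : V 0 0 * V 1 2 = 0 (up to ring normalization)
  -- V 0 0 > 0
  have hV00 : V 0 0 = S 0 0 ^ 2 + S 0 1 ^ 2 + S 0 2 ^ 2 + S 0 3 ^ 2 := by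
    rw [hV]
    simp only [Matrix.mul_apply, Matrix.transpose_apply, Fin.sum_univ_four]
    ring
  have h1 := congrFun (congrFun hS 0) 1
  simp [Matrix.mul_apply, Matrix.transpose_apply, Fin.sum_univ_four, Omega, Matrix.vecHead, Matrix.vecTail] at h1
  have hpos : 0 < V 0 0 := by
    rcases lt_or_ge 0 (V 0 0) with h | h
    · exact h
    · exfalso
      have ha : S 0 0 = 0 := by nlinarith [sq_nonneg (S 0 0), sq_nonneg (S 0 1), sq_nonneg (S 0 2), sq_nonneg (S 0 3)]
      have hb : S 0 1 = 0 := by nlinarith [sq_nonneg (S 0 0), sq_nonneg (S 0 1), sq_nonneg (S 0 2), sq_nonneg (S 0 3)]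
      have hc : S 0 2 = 0 := by nlinarith [sq_nonneg (S 0 0), sq_nonneg (S 0 1), sq_nonneg (S 0 2), sq_nonneg (S 0 3)]
      have hd : S 0 3 = 0 := by nlinarith [sq_nonneg (S 0 0), sq_nonneg (S 0 1), sq_nonneg (S 0 2), sq_nonneg (S 0 3)]
      rw [ha, hb, hc, hd] at h1
      norm_num at h1
  have key : V 0 0 * V 1 2 = 0 := by linarith [h02]
  rcases mul_eq_zero.mp key with h | h
  · exact absurd h (ne_of_gt hpos)
  · exact h
end

section
/- Let V = (a_{ij}) be a real symmetric 4×4 matrix such that the complex Hermitian matrix V + iΩ is positive semidefinite. Then a_{13}² + a_{23}² ≤ a_{33}·(a_{11} + a_{22} − 2). -/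
open Matrix
open scoped ComplexOrder

/-- If `V` is a real symmetric 4×4 matrix with `V + iΩ` positive semidefinite, then
`a₁₃² + a₂₃² ≤ a₃₃ (a₁₁ + a₂₂ − 2)`. -/
theorem stmt_1 (V : Matrix (Fin 4) (Fin 4) ℝ) (hsymm : V.IsSymm)
    (hpsd : (V.map Complex.ofReal + Complex.I • Omega.map Complex.ofReal).PosSemidef) :
    V 0 2 ^ 2 + V 1 2 ^ 2 ≤ V 2 2 * (V 0 0 + V 1 1 - 2) := by
  have h20 : V 2 0 = V 0 2 := hsymm.apply 0 2
  have h21 : V 2 1 = V 1 2 := hsymm.apply 1 2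
  have key : ∀ t : ℝ, 0 ≤ V 2 2 * (V 0 2 ^ 2 + V 1 2 ^ 2) * (t * t) +
      2 * (V 0 2 ^ 2 + V 1 2 ^ 2) * t + (V 0 0 + V 1 1 - 2) := by
    intro t
    have h := hpsd.dotProduct_mulVec_nonneg ![1, Complex.I, (t:ℂ)*(V 0 2 + V 1 2 * Complex.I), 0]
    rw [Complex.le_def] at h
    obtain ⟨h, -⟩ := h
    simp [Omega, dotProduct, mulVec, Fin.sum_univ_four, Matrix.map, Matrix.vecHead,
      Matrix.vecTail, Complex.add_re, Complex.mul_re, Complex.add_im, Complex.mul_im] at h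
    rw [h20, h21] at h
    nlinarith [h]
  have hA : 0 ≤ V 0 0 + V 1 1 - 2 := by have := key 0; linarith
  have h22 : 0 ≤ V 2 2 := by
    have h := hpsd.dotProduct_mulVec_nonneg ![0, 0, 1, 0]
    rw [Complex.le_def] at h
    obtain ⟨h, -⟩ := h
    simpa [Omega, dotProduct, mulVec, Fin.sum_univ_four, Matrix.map, Matrix.vecHead,
      Matrix.vecTail, Complex.add_re, Complex.mul_re] using h
  have hd := discrim_le_zero key
  rw [discrim] at hd
  have hr : 0 ≤ V 0 2 ^ 2 + V 1 2 ^ 2 := by positivity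
  nlinarith [hd, hA, h22, hr, sq_nonneg (V 0 2 ^ 2 + V 1 2 ^ 2 - V 2 2 * (V 0 0 + V 1 1 - 2)),
    mul_nonneg h22 hA]
end

section
/- Let V = (a_{ij}) be a real symmetric 4×4 matrix with a_{33} > 0 such that the complex Hermitian matrix V + iΩ is positive semidefinite, let x_s, p_s be real numbers (the signal first-order moments), let κ > 0 and N_B ≥ 0, and define the signal mean photon number N_S := (a_{11} + a_{22} − 2)/4 + (x_s² + p_s²)/2. Then κ·[(a_{13}² + a_{23}²)/a_{33} + 2(x_s² + p_s²)] / (4·(√N_B + √(1+N_B))²) ≤ N_S·κ / (√N_B + √(1+N_B))², i.e., the infinite-idler-squeezing limit of the collective decay constant is at most the collective decay constant of the coherent state with the same signal mean photon number. -/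
open Matrix
open scoped ComplexOrder

lemma key_ineq (V : Matrix (Fin 4) (Fin 4) ℝ) (hsymm : V.IsSymm) (h33 : 0 < V 2 2)
    (hpsd : (V.map Complex.ofReal + Complex.I • Omega.map Complex.ofReal).PosSemidef) :
    V 0 2 ^ 2 + V 1 2 ^ 2 ≤ (V 0 0 + V 1 1 - 2) * V 2 2 := by
  set a := V 0 2 with ha
  set b := V 1 2 with hb
  set c := V 2 2 with hc
  have e20 : V 2 0 = a := hsymm.apply 0 2
  have e21 : V 2 1 = b := hsymm.apply 1 2
  have e10 : V 1 0 = V 0 1 := hsymm.apply 0 1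
  set z : Fin 4 → ℂ := ![(c:ℂ), c * Complex.I, -((a:ℂ) + b * Complex.I), 0] with hz
  have h := hpsd.dotProduct_mulVec_nonneg z
  have qeq : star z ⬝ᵥ ((V.map Complex.ofReal + Complex.I • Omega.map Complex.ofReal) *ᵥ z)
      = ((c^2 * (V 0 0 + V 1 1 - 2) - c * (a^2 + b^2) : ℝ) : ℂ) := by
    simp [hz, Omega, Matrix.mulVec, dotProduct, Fin.sum_univ_four, Matrix.map_apply,
      Matrix.add_apply, Matrix.smul_apply, e20, e21, e10, Matrix.vecHead, Matrix.vecTail, Function.comp,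
      ← Complex.ofReal_pow, Complex.ext_iff]
    constructor <;> ring
  rw [qeq] at h
  have hr : (0:ℝ) ≤ c^2 * (V 0 0 + V 1 1 - 2) - c * (a^2 + b^2) := by
    exact_mod_cast h
  nlinarith [h33]

/-- The infinite-idler-squeezing limit of the collective decay constant is at most the
collective decay constant of the coherent state with the same signal mean photon number. -/
theorem stmt_2 (V : Matrix (Fin 4) (Fin 4) ℝ) (hsymm : V.IsSymm) (h33 : 0 < V 2 2)
    (hpsd : (V.map Complex.ofReal + Complex.I • Omega.map Complex.ofReal).PosSemidef)
    (x_s p_s κ N_B N_S : ℝ) (hκ : 0 < κ) (hNB : 0 ≤ N_B)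
    (hNS : N_S = (V 0 0 + V 1 1 - 2) / 4 + (x_s ^ 2 + p_s ^ 2) / 2) :
    κ * ((V 0 2 ^ 2 + V 1 2 ^ 2) / V 2 2 + 2 * (x_s ^ 2 + p_s ^ 2)) /
        (4 * (Real.sqrt N_B + Real.sqrt (1 + N_B)) ^ 2) ≤
      N_S * κ / (Real.sqrt N_B + Real.sqrt (1 + N_B)) ^ 2 := by
  have key := key_ineq V hsymm h33 hpsd
  have h1 : (V 0 2 ^ 2 + V 1 2 ^ 2) / V 2 2 ≤ V 0 0 + V 1 1 - 2 :=
    (div_le_iff₀ h33).mpr key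
  have hs : 0 < Real.sqrt N_B + Real.sqrt (1 + N_B) := by
    have : 0 < Real.sqrt (1 + N_B) := Real.sqrt_pos.mpr (by linarith)
    positivity
  have hD : 0 < (Real.sqrt N_B + Real.sqrt (1 + N_B)) ^ 2 := by positivity
  rw [div_le_div_iff₀ (by linarith) hD]
  have h2 : (V 0 2 ^ 2 + V 1 2 ^ 2) / V 2 2 + 2 * (x_s ^ 2 + p_s ^ 2) ≤ 4 * N_S := by
    rw [hNS]; linarith
  nlinarith [mul_le_mul_of_nonneg_left h2 hκ.le, hD.le,
    mul_le_mul_of_nonneg_right (mul_le_mul_of_nonneg_left h2 hκ.le) hD.le]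
end

section
/- For real numbers α, β with |α| < 1 and |β| ≤ 1, the function (z,w) ↦ exp(α z w̄ + β z̄ w − |z|² − |w|²) is integrable on ℂ², and (1/π²)·∫_{ℂ}∫_{ℂ} exp(α z w̄ + β z̄ w − |z|² − |w|²) d²z d²w = 1/(1 − αβ). -/
open MeasureTheory Complex

lemma gauss_c (c a b : ℂ) (hc : 0 < c.re) :
    ∫ z : ℂ, Complex.exp (-c * ((‖z‖ : ℝ) : ℂ) ^ 2 + a * z + b * (starRingEnd ℂ) z) =
      (Real.pi : ℂ) / c * Complex.exp (a * b / c) := by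
  have hc0 : c ≠ 0 := fun h => by simp [h] at hc
  rw [← (Complex.volume_preserving_equiv_real_prod.symm).integral_comp
    Complex.measurableEquivRealProd.symm.measurableEmbedding]
  have key : ∀ p : ℝ × ℝ,
      Complex.exp (-c * (‖Complex.measurableEquivRealProd.symm p‖ : ℂ) ^ 2
        + a * (Complex.measurableEquivRealProd.symm p)
        + b * (starRingEnd ℂ) (Complex.measurableEquivRealProd.symm p)) =
      Complex.exp (-c * (p.1 : ℂ) ^ 2 + (a + b) * (p.1 : ℂ) + 0) *
        Complex.exp (-c * (p.2 : ℂ) ^ 2 + ((a - b) * I) * (p.2 : ℂ) + 0) := by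
    intro p
    rw [← Complex.exp_add, Complex.measurableEquivRealProd_symm_apply, Complex.mk_eq_add_mul_I]
    congr 1
    have habs : ((‖(p.1 : ℂ) + (p.2 : ℂ) * I‖ : ℂ)) ^ 2
        = (p.1 : ℂ) ^ 2 + (p.2 : ℂ) ^ 2 := by
      rw [← Complex.ofReal_pow, Complex.sq_norm, Complex.normSq_add_mul_I]
      push_cast
      ring
    rw [habs, map_add, map_mul, Complex.conj_ofReal, Complex.conj_ofReal, Complex.conj_I]
    ring
  simp_rw [key]
  rw [MeasureTheory.Measure.volume_eq_prod, MeasureTheory.integral_prod_mul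
    (f := fun x : ℝ => Complex.exp (-c * (x : ℂ) ^ 2 + (a + b) * (x : ℂ) + 0))
    (g := fun y : ℝ => Complex.exp (-c * (y : ℂ) ^ 2 + ((a - b) * I) * (y : ℂ) + 0))]
  have h1 : (-c).re < 0 := by simpa using hc
  rw [integral_cexp_quadratic h1 (a + b) 0, integral_cexp_quadratic h1 ((a - b) * I) 0]
  have hpc : (Real.pi : ℂ) / c ≠ 0 := by
    apply div_ne_zero _ hc0
    exact_mod_cast Real.pi_ne_zero
  have hsq : ((Real.pi : ℂ) / -(-c)) ^ (1 / 2 : ℂ) * ((Real.pi : ℂ) / -(-c)) ^ (1 / 2 : ℂ)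
      = (Real.pi : ℂ) / c := by
    rw [neg_neg, ← Complex.cpow_add _ _ hpc]
    norm_num
  rw [show ((Real.pi:ℂ) / -(-c)) ^ (1/2:ℂ) * Complex.exp (0 - (a+b)^2 / (4 * -c)) *
      (((Real.pi:ℂ) / -(-c)) ^ (1/2:ℂ) * Complex.exp (0 - ((a-b)*I)^2 / (4 * -c))) =
      (((Real.pi:ℂ) / -(-c)) ^ (1/2:ℂ) * ((Real.pi:ℂ) / -(-c)) ^ (1/2:ℂ)) *
      (Complex.exp (0 - (a+b)^2 / (4 * -c)) * Complex.exp (0 - ((a-b)*I)^2 / (4 * -c))) by ring,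
    hsq, ← Complex.exp_add]
  congr 1
  have : I ^ 2 = -1 := Complex.I_sq
  field_simp
  ring_nf
  rw [Complex.I_sq]
  ring

lemma int_rexp_bound (ε : ℝ) (hε : 0 < ε) :
    Integrable (fun v : ℂ => Real.exp (-ε * ‖v‖ ^ 2)) := by
  have h := (GaussianFourier.integrable_cexp_neg_mul_sq_norm_add (V := ℂ) (b := (ε : ℂ))
    (by simpa using hε) 0 0).norm
  refine h.congr (Filter.Eventually.of_forall fun v => ?_)
  simp [Complex.norm_exp, ← Complex.ofReal_pow]

/-- Base Gaussian integral over ℂ²: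
`(1/π²) ∫∫ exp(α z w̄ + β z̄ w − |z|² − |w|²) d²z d²w = 1/(1 − αβ)` for `|α| < 1`, `|β| ≤ 1`. -/
theorem stmt_3 (α β : ℝ) (hα : |α| < 1) (hβ : |β| ≤ 1) :
    Integrable (fun p : ℂ × ℂ =>
        Complex.exp ((α : ℂ) * p.1 * (starRingEnd ℂ) p.2 + (β : ℂ) * (starRingEnd ℂ) p.1 * p.2
          - ((‖p.1‖ : ℝ) : ℂ) ^ 2 - ((‖p.2‖ : ℝ) : ℂ) ^ 2)) ∧
      (1 / (Real.pi : ℂ) ^ 2) *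
          ∫ p : ℂ × ℂ,
            Complex.exp ((α : ℂ) * p.1 * (starRingEnd ℂ) p.2 + (β : ℂ) * (starRingEnd ℂ) p.1 * p.2
              - ((‖p.1‖ : ℝ) : ℂ) ^ 2 - ((‖p.2‖ : ℝ) : ℂ) ^ 2) =
        1 / (1 - (α : ℂ) * (β : ℂ)) := by
  set ε : ℝ := 1 - (|α| + |β|) / 2 with hεdef
  have hε : 0 < ε := by simp only [hεdef]; linarith
  -- integrability
  have hbound : Integrable (fun p : ℂ × ℂ =>
      Real.exp (-ε * ‖p.1‖ ^ 2) * Real.exp (-ε * ‖p.2‖ ^ 2)) := by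
    rw [MeasureTheory.Measure.volume_eq_prod]
    exact (int_rexp_bound ε hε).mul_prod (int_rexp_bound ε hε)
  have hmeas : AEStronglyMeasurable (fun p : ℂ × ℂ =>
      Complex.exp ((α : ℂ) * p.1 * (starRingEnd ℂ) p.2 + (β : ℂ) * (starRingEnd ℂ) p.1 * p.2
        - ((‖p.1‖ : ℝ) : ℂ) ^ 2 - ((‖p.2‖ : ℝ) : ℂ) ^ 2)) := by
    apply Continuous.aestronglyMeasurable
    continuity
  have hint : Integrable (fun p : ℂ × ℂ =>
      Complex.exp ((α : ℂ) * p.1 * (starRingEnd ℂ) p.2 + (β : ℂ) * (starRingEnd ℂ) p.1 * p.2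
        - ((‖p.1‖ : ℝ) : ℂ) ^ 2 - ((‖p.2‖ : ℝ) : ℂ) ^ 2)) := by
    apply hbound.mono' hmeas
    refine Filter.Eventually.of_forall fun p => ?_
    rw [Complex.norm_exp, ← Real.exp_add]
    apply Real.exp_le_exp.2
    have hre : ((α : ℂ) * p.1 * (starRingEnd ℂ) p.2 + (β : ℂ) * (starRingEnd ℂ) p.1 * p.2
        - ((‖p.1‖ : ℝ) : ℂ) ^ 2 - ((‖p.2‖ : ℝ) : ℂ) ^ 2).re
        = α * (p.1 * (starRingEnd ℂ) p.2).re + β * ((starRingEnd ℂ) p.1 * p.2).re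
          - ‖p.1‖ ^ 2 - ‖p.2‖ ^ 2 := by
      simp [Complex.sub_re, Complex.add_re, mul_assoc, Complex.re_ofReal_mul,
        ← Complex.ofReal_pow]
    rw [hre, hεdef]
    have h1 : α * (p.1 * (starRingEnd ℂ) p.2).re ≤ |α| * (‖p.1‖ * ‖p.2‖) := by
      calc α * (p.1 * (starRingEnd ℂ) p.2).re ≤ |α * (p.1 * (starRingEnd ℂ) p.2).re| :=
            le_abs_self _
        _ = |α| * |(p.1 * (starRingEnd ℂ) p.2).re| := abs_mul _ _
        _ ≤ |α| * ‖p.1 * (starRingEnd ℂ) p.2‖ := by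
            gcongr; exact Complex.abs_re_le_norm _
        _ = |α| * (‖p.1‖ * ‖p.2‖) := by
            rw [norm_mul, Complex.norm_conj]
    have h2 : β * ((starRingEnd ℂ) p.1 * p.2).re ≤ |β| * (‖p.1‖ * ‖p.2‖) := by
      calc β * ((starRingEnd ℂ) p.1 * p.2).re ≤ |β * ((starRingEnd ℂ) p.1 * p.2).re| :=
            le_abs_self _
        _ = |β| * |((starRingEnd ℂ) p.1 * p.2).re| := abs_mul _ _
        _ ≤ |β| * ‖(starRingEnd ℂ) p.1 * p.2‖ := by
            gcongr; exact Complex.abs_re_le_norm _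
        _ = |β| * (‖p.1‖ * ‖p.2‖) := by
            rw [norm_mul, Complex.norm_conj]
    have hab : 0 ≤ |α| + |β| := by positivity
    nlinarith [mul_nonneg hab (sq_nonneg (‖p.1‖ - ‖p.2‖)),
      norm_nonneg p.1, norm_nonneg p.2]
  refine ⟨hint, ?_⟩
  -- value
  have hαβ : α * β < 1 := by
    have : |α * β| < 1 := by
      rw [abs_mul]
      calc |α| * |β| ≤ |α| * 1 := by gcongr;
        _ < 1 := by simpa using hα
    exact lt_of_le_of_lt (le_abs_self _) this
  have hcre : (0:ℝ) < ((1 : ℂ) - (α : ℂ) * (β : ℂ)).re := by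
    simp only [Complex.sub_re, Complex.one_re, Complex.mul_re, Complex.ofReal_re,
      Complex.ofReal_im]
    simpa using sub_pos.2 hαβ
  have hc0 : (1 : ℂ) - (α : ℂ) * (β : ℂ) ≠ 0 := fun h => by
    rw [h] at hcre; simp at hcre
  have hπ : (Real.pi : ℂ) ≠ 0 := by exact_mod_cast Real.pi_ne_zero
  have hint' : Integrable (fun p : ℂ × ℂ =>
      Complex.exp ((α : ℂ) * p.1 * (starRingEnd ℂ) p.2 + (β : ℂ) * (starRingEnd ℂ) p.1 * p.2
        - ((‖p.1‖ : ℝ) : ℂ) ^ 2 - ((‖p.2‖ : ℝ) : ℂ) ^ 2))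
        (volume.prod volume) := by
    rwa [MeasureTheory.Measure.volume_eq_prod] at hint
  rw [MeasureTheory.Measure.volume_eq_prod, MeasureTheory.integral_prod _ hint']
  have inner_eq : ∀ z : ℂ,
      (∫ w : ℂ, Complex.exp ((α : ℂ) * z * (starRingEnd ℂ) w + (β : ℂ) * (starRingEnd ℂ) z * w
        - ((‖z‖ : ℝ) : ℂ) ^ 2 - ((‖w‖ : ℝ) : ℂ) ^ 2))
      = (Real.pi : ℂ) * Complex.exp (-((1:ℂ) - (α:ℂ)*(β:ℂ)) * ((‖z‖ : ℝ) : ℂ) ^ 2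
          + 0 * z + 0 * (starRingEnd ℂ) z) := by
    intro z
    have step : ∀ w : ℂ,
        Complex.exp ((α : ℂ) * z * (starRingEnd ℂ) w + (β : ℂ) * (starRingEnd ℂ) z * w
          - ((‖z‖ : ℝ) : ℂ) ^ 2 - ((‖w‖ : ℝ) : ℂ) ^ 2)
        = Complex.exp (-((‖z‖ : ℝ) : ℂ) ^ 2) *
          Complex.exp (-1 * ((‖w‖ : ℝ) : ℂ) ^ 2 + ((β : ℂ) * (starRingEnd ℂ) z) * w
            + ((α : ℂ) * z) * (starRingEnd ℂ) w) := by
      intro w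
      rw [← Complex.exp_add]
      congr 1
      ring
    simp_rw [step]
    rw [MeasureTheory.integral_const_mul, gauss_c 1 ((β : ℂ) * (starRingEnd ℂ) z) ((α : ℂ) * z)
      (by norm_num)]
    have hconj : (starRingEnd ℂ) z * z = ((‖z‖ : ℝ) : ℂ) ^ 2 := by
      rw [mul_comm, Complex.mul_conj, ← Complex.ofReal_pow, Complex.sq_norm]
    have hzz : ((β : ℂ) * (starRingEnd ℂ) z) * ((α : ℂ) * z) / 1
        = (α : ℂ) * (β : ℂ) * ((‖z‖ : ℝ) : ℂ) ^ 2 := by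
      rw [div_one, show ((β : ℂ) * (starRingEnd ℂ) z) * ((α : ℂ) * z)
        = (α : ℂ) * (β : ℂ) * ((starRingEnd ℂ) z * z) from by ring, hconj]
    rw [hzz, div_one]
    rw [show Complex.exp (-((‖z‖ : ℝ) : ℂ) ^ 2) *
        ((Real.pi : ℂ) * Complex.exp ((α : ℂ) * (β : ℂ) * ((‖z‖ : ℝ) : ℂ) ^ 2)) =
        (Real.pi : ℂ) * (Complex.exp (-((‖z‖ : ℝ) : ℂ) ^ 2) *
          Complex.exp ((α : ℂ) * (β : ℂ) * ((‖z‖ : ℝ) : ℂ) ^ 2)) from by ring,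
      ← Complex.exp_add]
    congr 2
    ring
  simp_rw [inner_eq]
  rw [MeasureTheory.integral_const_mul, gauss_c ((1:ℂ) - (α:ℂ)*(β:ℂ)) 0 0 hcre]
  simp only [zero_mul, zero_div, Complex.exp_zero, mul_one]
  rw [show (1:ℂ)/(Real.pi:ℂ)^2 * ((Real.pi:ℂ) * ((Real.pi:ℂ) / ((1:ℂ) - (α:ℂ)*(β:ℂ)))) =
      ((Real.pi:ℂ)^2/(Real.pi:ℂ)^2) * (1/((1:ℂ) - (α:ℂ)*(β:ℂ))) from by ring,
    div_self (pow_ne_zero 2 hπ), one_mul]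
end

section
/- For a real number a with |a| < 1, the function (z,w) ↦ (z² − w̄²)(z̄² − w²)·exp(a z w̄ + z̄ w − |z|² − |w|²) is integrable on ℂ², and (1/π²)·∫_{ℂ}∫_{ℂ} (z² − w̄²)(z̄² − w²)·exp(a z w̄ + z̄ w − |z|² − |w|²) d²z d²w = 4/(1 − a)³. -/
open MeasureTheory Complex Real

noncomputable section

namespace Stmt5Aux

/-- 1D real integrability workhorse. -/
lemma integrable_aux {s : ℝ} (hs : s < 0) (n : ℕ) (r : ℝ) :
    Integrable (fun x : ℝ => |x| ^ n * Real.exp (s * x ^ 2 + r * |x|)) := by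
  have h2 : (0:ℝ) < -(s/2) := by linarith
  have hbase : Integrable (fun x : ℝ => |x| ^ n * Real.exp (s/2 * x ^ 2)) := by
    have h := (integrable_rpow_mul_exp_neg_mul_sq h2 (show (-1:ℝ) < (n:ℝ) by exact lt_of_lt_of_le (by norm_num) (Nat.cast_nonneg n))).abs
    refine h.congr (Filter.Eventually.of_forall fun x => ?_)
    simp only [abs_mul, _root_.abs_of_nonneg (Real.exp_pos _).le, Real.rpow_natCast, abs_pow]
    ring_nf
  have h2s : (0:ℝ) < -2*s := by linarith
  have hC : ∀ x : ℝ, s * x ^ 2 + r * |x| ≤ s/2 * x^2 + r^2 / (-2*s) := by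
    intro x
    have step : s * x ^ 2 + r * |x| - s/2 * x^2 ≤ r^2 / (-2*s) := by
      rw [le_div_iff₀ h2s]
      have ht : x^2 = |x|^2 := (_root_.sq_abs x).symm
      rw [ht]
      nlinarith [sq_nonneg (s * |x| + r)]
    linarith
  refine Integrable.mono' ((hbase.const_mul (Real.exp (r^2/(-2*s))))) ?_
    (Filter.Eventually.of_forall fun x => ?_)
  · apply Continuous.aestronglyMeasurable
    have : Continuous fun x : ℝ => |x| := continuous_abs
    fun_prop
  · rw [Real.norm_eq_abs, abs_mul, _root_.abs_of_nonneg (Real.exp_pos _).le, _root_.abs_pow, _root_.abs_abs]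
    calc |x|^n * Real.exp (s*x^2 + r*|x|)
        ≤ |x|^n * (Real.exp (s/2*x^2) * Real.exp (r^2/(-2*s))) := by
          apply mul_le_mul_of_nonneg_left _ (by positivity)
          rw [← Real.exp_add]; exact Real.exp_le_exp.mpr (hC x)
      _ = Real.exp (r^2/(-2*s)) * (|x|^n * Real.exp (s/2*x^2)) := by ring

lemma integrable_J {b : ℂ} (hb : b.re < 0) (n : ℕ) (c : ℂ) :
    Integrable fun x : ℝ => (x:ℂ) ^ n * Complex.exp (b * x ^ 2 + c * x) := by
  refine Integrable.mono' (integrable_aux hb n |c.re|) ?_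
    (Filter.Eventually.of_forall fun x => ?_)
  · apply Continuous.aestronglyMeasurable; fun_prop
  · rw [norm_mul, norm_pow, Complex.norm_real, Complex.norm_exp]
    have hre : (b * (x:ℂ) ^ 2 + c * (x:ℂ)).re = b.re * x^2 + c.re * x := by
      simp [Complex.add_re, Complex.mul_re, ← Complex.ofReal_pow]
    rw [hre, Real.norm_eq_abs]
    have : b.re * x ^ 2 + c.re * x ≤ b.re * x^2 + |c.re| * |x| := by
      have : c.re * x ≤ |c.re| * |x| := le_trans (le_abs_self _) (by rw [abs_mul])
      linarith
    exact mul_le_mul_of_nonneg_left (Real.exp_le_exp.mpr this) (by positivity)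

lemma hasDerivAt_J {b : ℂ} (hb : b.re < 0) (n : ℕ) (c₀ : ℂ) :
    HasDerivAt (fun c : ℂ => ∫ x : ℝ, (x:ℂ) ^ n * Complex.exp (b * x ^ 2 + c * x))
      (∫ x : ℝ, (x:ℂ) ^ (n+1) * Complex.exp (b * x ^ 2 + c₀ * x)) c₀ := by
  have key := hasDerivAt_integral_of_dominated_loc_of_deriv_le (F := fun (c : ℂ) (x : ℝ) =>
      (x:ℂ) ^ n * Complex.exp (b * x ^ 2 + c * x))
      (F' := fun (c : ℂ) (x : ℝ) => (x:ℂ) ^ (n+1) * Complex.exp (b * x ^ 2 + c * x))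
      (x₀ := c₀) (bound := fun x : ℝ => |x| ^ (n+1) * Real.exp (b.re * x ^ 2 + (‖c₀‖+1) * |x|))
      (Metric.ball_mem_nhds c₀ one_pos) ?_ (integrable_J hb n c₀) ?_ ?_ ?_ ?_
  · exact key.2
  · exact Filter.Eventually.of_forall fun c =>
      ((integrable_J hb n c).aestronglyMeasurable)
  · exact (integrable_J hb (n+1) c₀).aestronglyMeasurable
  · refine Filter.Eventually.of_forall fun x => fun c hc => ?_
    rw [norm_mul, norm_pow, Complex.norm_real, Complex.norm_exp,
      Real.norm_eq_abs]
    have hre : (b * (x:ℂ) ^ 2 + c * (x:ℂ)).re = b.re * x^2 + c.re * x := by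
      simp [Complex.add_re, Complex.mul_re, ← Complex.ofReal_pow]
    rw [hre]
    have hcre : c.re * x ≤ (‖c₀‖+1) * |x| := by
      have h1 : c.re * x ≤ |c.re| * |x| := le_trans (le_abs_self _) (by rw [abs_mul])
      have h2 : |c.re| ≤ ‖c‖ := Complex.abs_re_le_norm c
      have h3 : ‖c‖ ≤ ‖c₀‖ + 1 := by
        have := mem_ball_iff_norm.mp hc
        calc ‖c‖ = ‖c₀ + (c - c₀)‖ := by ring_nf
          _ ≤ ‖c₀‖ + ‖c - c₀‖ := norm_add_le _ _
          _ ≤ ‖c₀‖ + 1 := by linarith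
      nlinarith [abs_nonneg x, abs_nonneg c.re]
    exact mul_le_mul_of_nonneg_left (Real.exp_le_exp.mpr (by linarith)) (by positivity)
  · exact integrable_aux hb (n+1) (‖c₀‖+1)
  · refine Filter.Eventually.of_forall fun x => fun c hc => ?_
    have h1 : HasDerivAt (fun c : ℂ => b * (x:ℂ)^2 + c * (x:ℂ)) (x:ℂ) c := by
      simpa using ((hasDerivAt_id c).mul_const (x:ℂ)).const_add (b * (x:ℂ)^2)
    have h2 := (h1.cexp).const_mul ((x:ℂ)^n)
    exact h2.congr_deriv (by ring)


/-- Normalization constant. -/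
def Kb (b : ℂ) : ℂ := ((Real.pi : ℂ) / -b) ^ (1/2 : ℂ)

/-- Quarter-inverse coefficient. -/
def dd (b : ℂ) : ℂ := -(1/(4*b))

lemma bne {b : ℂ} (hb : b.re < 0) : b ≠ 0 := fun h => by simp [h] at hb

lemma Kb_sq {b : ℂ} (hb : b.re < 0) : Kb b ^ 2 = (Real.pi : ℂ) / -b := by
  have hx : ((Real.pi : ℂ) / -b) ≠ 0 :=
    div_ne_zero (by exact_mod_cast Real.pi_ne_zero) (neg_ne_zero.mpr (bne hb))
  rw [Kb, sq, ← Complex.cpow_add _ _ hx]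
  rw [show (1/2 + 1/2 : ℂ) = 1 by norm_num, Complex.cpow_one]

lemma J0val {b : ℂ} (hb : b.re < 0) (c : ℂ) :
    ∫ x : ℝ, (x:ℂ)^0 * Complex.exp (b*x^2 + c*x) = Kb b * Complex.exp (dd b * c^2) * 1 := by
  simp only [pow_zero, one_mul, mul_one]
  have h := integral_cexp_quadratic hb c 0
  simp only [add_zero, zero_sub] at h
  rw [h, Kb, dd]
  congr 1
  field_simp

lemma Jstep {b : ℂ} (hb : b.re < 0) (n : ℕ) {P P' : ℂ → ℂ}
    (hval : ∀ c, ∫ x : ℝ, (x:ℂ)^n * Complex.exp (b*x^2 + c*x)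
      = Kb b * Complex.exp (dd b * c^2) * P c)
    (hP : ∀ c, HasDerivAt P (P' c) c) (c : ℂ) :
    ∫ x : ℝ, (x:ℂ)^(n+1) * Complex.exp (b*x^2 + c*x)
      = Kb b * Complex.exp (dd b * c^2) * (2 * dd b * c * P c + P' c) := by
  have h1 := hasDerivAt_J hb n c
  have heq : (fun c : ℂ => ∫ x : ℝ, (x:ℂ)^n * Complex.exp (b*x^2 + c*x))
      = fun c => Kb b * Complex.exp (dd b * c^2) * P c := funext hval
  rw [heq] at h1
  have ha : HasDerivAt (fun c : ℂ => dd b * c^2) (dd b * (2*c)) c := by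
    have := (hasDerivAt_pow 2 c).const_mul (dd b)
    exact this.congr_deriv (by ring)
  have hb2 := (ha.cexp).const_mul (Kb b)
  have h2 := hb2.mul (hP c)
  refine h1.unique ?_
  exact h2.congr_deriv (by ring)

lemma J1val {b : ℂ} (hb : b.re < 0) (c : ℂ) :
    ∫ x : ℝ, (x:ℂ)^1 * Complex.exp (b*x^2 + c*x)
      = Kb b * Complex.exp (dd b * c^2) * (2 * dd b * c) := by
  rw [Jstep hb 0 (J0val hb) (fun c => hasDerivAt_const c 1) c]
  ring

lemma J2val {b : ℂ} (hb : b.re < 0) (c : ℂ) :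
    ∫ x : ℝ, (x:ℂ)^2 * Complex.exp (b*x^2 + c*x)
      = Kb b * Complex.exp (dd b * c^2) * (4 * dd b^2 * c^2 + 2 * dd b) := by
  have hP : ∀ c : ℂ, HasDerivAt (fun c : ℂ => 2 * dd b * c) (2 * dd b) c := fun c => by
    simpa using (hasDerivAt_id c).const_mul (2 * dd b)
  have h := Jstep hb 1 (J1val hb) hP c
  norm_num at h
  rw [h]
  ring

lemma J3val {b : ℂ} (hb : b.re < 0) (c : ℂ) :
    ∫ x : ℝ, (x:ℂ)^3 * Complex.exp (b*x^2 + c*x)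
      = Kb b * Complex.exp (dd b * c^2) * (8 * dd b^3 * c^3 + 12 * dd b^2 * c) := by
  have hP : ∀ c : ℂ, HasDerivAt (fun c : ℂ => 4 * dd b^2 * c^2 + 2 * dd b)
      (8 * dd b^2 * c) c := fun c => by
    have := ((hasDerivAt_pow 2 c).const_mul (4 * dd b^2)).add_const (2 * dd b)
    exact this.congr_deriv (by ring)
  have h := Jstep hb 2 (J2val hb) hP c
  norm_num at h
  rw [h]
  ring

lemma J4val {b : ℂ} (hb : b.re < 0) (c : ℂ) :
    ∫ x : ℝ, (x:ℂ)^4 * Complex.exp (b*x^2 + c*x)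
      = Kb b * Complex.exp (dd b * c^2)
        * (16 * dd b^4 * c^4 + 48 * dd b^3 * c^2 + 12 * dd b^2) := by
  have hP : ∀ c : ℂ, HasDerivAt (fun c : ℂ => 8 * dd b^3 * c^3 + 12 * dd b^2 * c)
      (24 * dd b^3 * c^2 + 12 * dd b^2) c := fun c => by
    have := ((hasDerivAt_pow 3 c).const_mul (8 * dd b^3)).add
      ((hasDerivAt_id c).const_mul (12 * dd b^2))
    exact this.congr_deriv (by push_cast; ring)
  have h := Jstep hb 3 (J3val hb) hP c
  norm_num at h
  rw [h]
  ring

/-! ### Transfer between ℂ and ℝ × ℝ -/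

lemma conj_mk (x y : ℝ) : (starRingEnd ℂ) ((x:ℂ) + (y:ℂ)*I) = (x:ℂ) - (y:ℂ)*I := by
  simp [map_add, map_mul, Complex.conj_ofReal, Complex.conj_I]
  ring

lemma fun_eq {E : Type*} (f : ℂ → E) :
    (f ∘ Complex.measurableEquivRealProd.symm)
      = fun p : ℝ × ℝ => f ((p.1:ℂ) + (p.2:ℂ)*I) := by
  funext p
  simp only [Function.comp, Complex.measurableEquivRealProd_symm_apply]
  congr 1
  exact (Complex.mk_eq_add_mul_I _ _)

lemma integral_c {E : Type*} [NormedAddCommGroup E] [NormedSpace ℝ E] (f : ℂ → E) :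
    ∫ z : ℂ, f z = ∫ p : ℝ × ℝ, f ((p.1 : ℂ) + (p.2 : ℂ) * I) := by
  rw [← (Complex.volume_preserving_equiv_real_prod.symm _).integral_comp
    Complex.measurableEquivRealProd.symm.measurableEmbedding f, ← fun_eq f]
  rfl

lemma integrable_c_iff {E : Type*} [NormedAddCommGroup E] (f : ℂ → E) :
    Integrable f ↔ Integrable fun p : ℝ × ℝ => f ((p.1:ℂ) + (p.2:ℂ)*I) := by
  rw [← fun_eq f, (Complex.volume_preserving_equiv_real_prod.symm _).integrable_comp_emb
    Complex.measurableEquivRealProd.symm.measurableEmbedding]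

/-! ### Linearity helpers -/

lemma integral_lin2 {α : Type*} [MeasurableSpace α] {μ : Measure α} {f1 f2 : α → ℂ}
    (h1 : Integrable f1 μ) (h2 : Integrable f2 μ) (a1 a2 : ℂ) :
    ∫ x, (a1 * f1 x + a2 * f2 x) ∂μ
      = a1 * (∫ x, f1 x ∂μ) + a2 * (∫ x, f2 x ∂μ) := by
  rw [integral_add (h1.const_mul a1) (h2.const_mul a2), integral_const_mul _ _, integral_const_mul _ _]

lemma integral_lin3 {α : Type*} [MeasurableSpace α] {μ : Measure α} {f1 f2 f3 : α → ℂ}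
    (h1 : Integrable f1 μ) (h2 : Integrable f2 μ) (h3 : Integrable f3 μ) (a1 a2 a3 : ℂ) :
    ∫ x, (a1 * f1 x + a2 * f2 x + a3 * f3 x) ∂μ
      = a1 * (∫ x, f1 x ∂μ) + a2 * (∫ x, f2 x ∂μ) + a3 * (∫ x, f3 x ∂μ) := by
  have h12 : Integrable (fun x => a1 * f1 x + a2 * f2 x) μ :=
    (h1.const_mul a1).add (h2.const_mul a2)
  rw [integral_add h12 (h3.const_mul a3), integral_lin2 h1 h2, integral_const_mul _ _]

lemma integral_lin4 {α : Type*} [MeasurableSpace α] {μ : Measure α} {f1 f2 f3 f4 : α → ℂ}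
    (h1 : Integrable f1 μ) (h2 : Integrable f2 μ) (h3 : Integrable f3 μ)
    (h4 : Integrable f4 μ) (a1 a2 a3 a4 : ℂ) :
    ∫ x, (a1 * f1 x + a2 * f2 x + a3 * f3 x + a4 * f4 x) ∂μ
      = a1 * (∫ x, f1 x ∂μ) + a2 * (∫ x, f2 x ∂μ) + a3 * (∫ x, f3 x ∂μ)
        + a4 * (∫ x, f4 x ∂μ) := by
  have h123 : Integrable (fun x => a1 * f1 x + a2 * f2 x + a3 * f3 x) μ :=
    ((h1.const_mul a1).add (h2.const_mul a2)).add (h3.const_mul a3)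
  rw [integral_add h123 (h4.const_mul a4), integral_lin3 h1 h2 h3, integral_const_mul _ _]

lemma integral_lin5 {α : Type*} [MeasurableSpace α] {μ : Measure α} {f1 f2 f3 f4 f5 : α → ℂ}
    (h1 : Integrable f1 μ) (h2 : Integrable f2 μ) (h3 : Integrable f3 μ)
    (h4 : Integrable f4 μ) (h5 : Integrable f5 μ) (a1 a2 a3 a4 a5 : ℂ) :
    ∫ x, (a1 * f1 x + a2 * f2 x + a3 * f3 x + a4 * f4 x + a5 * f5 x) ∂μ
      = a1 * (∫ x, f1 x ∂μ) + a2 * (∫ x, f2 x ∂μ) + a3 * (∫ x, f3 x ∂μ)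
        + a4 * (∫ x, f4 x ∂μ) + a5 * (∫ x, f5 x ∂μ) := by
  have h1234 : Integrable (fun x => a1 * f1 x + a2 * f2 x + a3 * f3 x + a4 * f4 x) μ :=
    (((h1.const_mul a1).add (h2.const_mul a2)).add (h3.const_mul a3)).add (h4.const_mul a4)
  rw [integral_add h1234 (h5.const_mul a5), integral_lin4 h1 h2 h3 h4, integral_const_mul _ _]

/-! ### Product terms on ℝ × ℝ -/

lemma term_eval {b : ℂ} (hb : b.re < 0) (j k : ℕ) (u v : ℂ) :
    Integrable (fun pt : ℝ × ℝ =>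
      ((pt.1:ℂ)^j * Complex.exp (b*pt.1^2 + u*pt.1))
        * ((pt.2:ℂ)^k * Complex.exp (b*pt.2^2 + v*pt.2))) ∧
    ∫ pt : ℝ × ℝ, ((pt.1:ℂ)^j * Complex.exp (b*pt.1^2 + u*pt.1))
        * ((pt.2:ℂ)^k * Complex.exp (b*pt.2^2 + v*pt.2))
      = (∫ x : ℝ, (x:ℂ)^j * Complex.exp (b*x^2 + u*x))
        * ∫ y : ℝ, (y:ℂ)^k * Complex.exp (b*y^2 + v*y) := by
  constructor
  · rw [Measure.volume_eq_prod]
    exact (integrable_J hb j u).mul_prod (integrable_J hb k v)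
  · rw [Measure.volume_eq_prod]
    exact integral_prod_mul (fun x : ℝ => (x:ℂ)^j * Complex.exp (b*x^2 + u*x))
      (fun y : ℝ => (y:ℂ)^k * Complex.exp (b*y^2 + v*y))

lemma exp_split (b c1 c2 : ℂ) (x y : ℝ) :
    b*(((x:ℂ)+(y:ℂ)*I) * ((x:ℂ)-(y:ℂ)*I)) + c1*((x:ℂ)+(y:ℂ)*I) + c2*((x:ℂ)-(y:ℂ)*I)
      = (b*x^2 + (c1+c2)*x) + (b*y^2 + ((c1-c2)*I)*y) := by
  linear_combination (-b*(y:ℂ)^2) * Complex.I_sq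

lemma exp_split0 (b : ℂ) (x y : ℝ) :
    b*(((x:ℂ)+(y:ℂ)*I) * ((x:ℂ)-(y:ℂ)*I))
      = (b*x^2 + (0:ℂ)*x) + (b*y^2 + (0:ℂ)*y) := by
  linear_combination (-b*(y:ℂ)^2) * Complex.I_sq

lemma hE_eq (b c1 c2 : ℂ) :
    Complex.exp (dd b*(c1+c2)^2) * Complex.exp (dd b*((c1-c2)*I)^2)
      = Complex.exp (4*dd b*(c1*c2)) := by
  rw [← Complex.exp_add]
  congr 1
  linear_combination (dd b*(c1-c2)^2) * Complex.I_sq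

/-! ### Monomial integrals over ℂ -/

lemma M00 {b : ℂ} (hb : b.re < 0) (c1 c2 : ℂ) :
    Integrable (fun w : ℂ =>
      Complex.exp (b*(w * (starRingEnd ℂ) w) + c1*w + c2*(starRingEnd ℂ) w)) ∧
    ∫ w : ℂ, Complex.exp (b*(w * (starRingEnd ℂ) w) + c1*w + c2*(starRingEnd ℂ) w)
      = Kb b^2 * Complex.exp (4*dd b*(c1*c2)) := by
  have h1 := term_eval hb 0 0 (c1+c2) ((c1-c2)*I)
  have hpt : ∀ pt : ℝ × ℝ,
      Complex.exp (b*((((pt.1:ℂ)+(pt.2:ℂ)*I)) * (starRingEnd ℂ) ((pt.1:ℂ)+(pt.2:ℂ)*I))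
          + c1*((pt.1:ℂ)+(pt.2:ℂ)*I) + c2*(starRingEnd ℂ) ((pt.1:ℂ)+(pt.2:ℂ)*I))
      = ((pt.1:ℂ)^0 * Complex.exp (b*pt.1^2 + (c1+c2)*pt.1))
          * ((pt.2:ℂ)^0 * Complex.exp (b*pt.2^2 + ((c1-c2)*I)*pt.2)) := by
    intro pt
    rw [conj_mk, exp_split b c1 c2, Complex.exp_add]
    ring
  constructor
  · rw [integrable_c_iff]
    exact h1.1.congr (Filter.Eventually.of_forall fun pt => ((hpt pt).symm : _))
  · refine ((integral_c _).trans (MeasureTheory.integral_congr_ae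
      (Filter.Eventually.of_forall hpt))).trans (h1.2.trans ?_)
    rw [J0val hb, J0val hb]
    linear_combination (Kb b^2) * hE_eq b c1 c2

lemma M20 {b : ℂ} (hb : b.re < 0) (c1 c2 : ℂ) :
    Integrable (fun w : ℂ =>
      w^2 * Complex.exp (b*(w * (starRingEnd ℂ) w) + c1*w + c2*(starRingEnd ℂ) w)) ∧
    ∫ w : ℂ, w^2 * Complex.exp (b*(w * (starRingEnd ℂ) w) + c1*w + c2*(starRingEnd ℂ) w)
      = Kb b^2 * Complex.exp (4*dd b*(c1*c2)) * (16 * dd b^2 * c2^2) := by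
  have h1 := term_eval hb 2 0 (c1+c2) ((c1-c2)*I)
  have h2 := term_eval hb 0 2 (c1+c2) ((c1-c2)*I)
  have h3 := term_eval hb 1 1 (c1+c2) ((c1-c2)*I)
  have hpt : ∀ pt : ℝ × ℝ,
      ((pt.1:ℂ)+(pt.2:ℂ)*I)^2
        * Complex.exp (b*((((pt.1:ℂ)+(pt.2:ℂ)*I)) * (starRingEnd ℂ) ((pt.1:ℂ)+(pt.2:ℂ)*I))
          + c1*((pt.1:ℂ)+(pt.2:ℂ)*I) + c2*(starRingEnd ℂ) ((pt.1:ℂ)+(pt.2:ℂ)*I))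
      = (1:ℂ) * (((pt.1:ℂ)^2 * Complex.exp (b*pt.1^2 + (c1+c2)*pt.1))
            * ((pt.2:ℂ)^0 * Complex.exp (b*pt.2^2 + ((c1-c2)*I)*pt.2)))
        + (-1:ℂ) * (((pt.1:ℂ)^0 * Complex.exp (b*pt.1^2 + (c1+c2)*pt.1))
            * ((pt.2:ℂ)^2 * Complex.exp (b*pt.2^2 + ((c1-c2)*I)*pt.2)))
        + (2*I) * (((pt.1:ℂ)^1 * Complex.exp (b*pt.1^2 + (c1+c2)*pt.1))
            * ((pt.2:ℂ)^1 * Complex.exp (b*pt.2^2 + ((c1-c2)*I)*pt.2))) := by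
    intro pt
    rw [conj_mk, exp_split b c1 c2, Complex.exp_add]
    linear_combination ((pt.2:ℂ)^2 * Complex.exp (b*(pt.1:ℂ)^2 + (c1+c2)*(pt.1:ℂ))
      * Complex.exp (b*(pt.2:ℂ)^2 + ((c1-c2)*I)*(pt.2:ℂ))) * Complex.I_sq
  constructor
  · rw [integrable_c_iff]
    exact (((h1.1.const_mul 1).add (h2.1.const_mul (-1))).add (h3.1.const_mul (2*I))).congr
      (Filter.Eventually.of_forall fun pt => ((hpt pt).symm : _))
  · refine ((integral_c _).trans (MeasureTheory.integral_congr_ae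
      (Filter.Eventually.of_forall hpt))).trans
      ((integral_lin3 h1.1 h2.1 h3.1 1 (-1) (2*I)).trans ?_)
    rw [h1.2, h2.2, h3.2]
    simp only [J0val hb, J1val hb, J2val hb]
    linear_combination (Kb b^2 * ((4*dd b^2*(c1+c2)^2 + 2*dd b)
        - (4*dd b^2*((c1-c2)*I)^2 + 2*dd b)
        + 2*I*(2*dd b*(c1+c2))*(2*dd b*((c1-c2)*I)))) * hE_eq b c1 c2
      + (Kb b^2 * Complex.exp (4*dd b*(c1*c2))
          * (8*dd b^2*(c1+c2)*(c1-c2) - 4*dd b^2*(c1-c2)^2)) * Complex.I_sq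

lemma M02 {b : ℂ} (hb : b.re < 0) (c1 c2 : ℂ) :
    Integrable (fun w : ℂ =>
      ((starRingEnd ℂ) w)^2
        * Complex.exp (b*(w * (starRingEnd ℂ) w) + c1*w + c2*(starRingEnd ℂ) w)) ∧
    ∫ w : ℂ, ((starRingEnd ℂ) w)^2
        * Complex.exp (b*(w * (starRingEnd ℂ) w) + c1*w + c2*(starRingEnd ℂ) w)
      = Kb b^2 * Complex.exp (4*dd b*(c1*c2)) * (16 * dd b^2 * c1^2) := by
  have h1 := term_eval hb 2 0 (c1+c2) ((c1-c2)*I)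
  have h2 := term_eval hb 0 2 (c1+c2) ((c1-c2)*I)
  have h3 := term_eval hb 1 1 (c1+c2) ((c1-c2)*I)
  have hpt : ∀ pt : ℝ × ℝ,
      ((starRingEnd ℂ) ((pt.1:ℂ)+(pt.2:ℂ)*I))^2
        * Complex.exp (b*((((pt.1:ℂ)+(pt.2:ℂ)*I)) * (starRingEnd ℂ) ((pt.1:ℂ)+(pt.2:ℂ)*I))
          + c1*((pt.1:ℂ)+(pt.2:ℂ)*I) + c2*(starRingEnd ℂ) ((pt.1:ℂ)+(pt.2:ℂ)*I))
      = (1:ℂ) * (((pt.1:ℂ)^2 * Complex.exp (b*pt.1^2 + (c1+c2)*pt.1))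
            * ((pt.2:ℂ)^0 * Complex.exp (b*pt.2^2 + ((c1-c2)*I)*pt.2)))
        + (-1:ℂ) * (((pt.1:ℂ)^0 * Complex.exp (b*pt.1^2 + (c1+c2)*pt.1))
            * ((pt.2:ℂ)^2 * Complex.exp (b*pt.2^2 + ((c1-c2)*I)*pt.2)))
        + (-(2*I)) * (((pt.1:ℂ)^1 * Complex.exp (b*pt.1^2 + (c1+c2)*pt.1))
            * ((pt.2:ℂ)^1 * Complex.exp (b*pt.2^2 + ((c1-c2)*I)*pt.2))) := by
    intro pt
    rw [conj_mk, exp_split b c1 c2, Complex.exp_add]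
    linear_combination ((pt.2:ℂ)^2 * Complex.exp (b*(pt.1:ℂ)^2 + (c1+c2)*(pt.1:ℂ))
      * Complex.exp (b*(pt.2:ℂ)^2 + ((c1-c2)*I)*(pt.2:ℂ))) * Complex.I_sq
  constructor
  · rw [integrable_c_iff]
    exact (((h1.1.const_mul 1).add (h2.1.const_mul (-1))).add (h3.1.const_mul (-(2*I)))).congr
      (Filter.Eventually.of_forall fun pt => ((hpt pt).symm : _))
  · refine ((integral_c _).trans (MeasureTheory.integral_congr_ae
      (Filter.Eventually.of_forall hpt))).trans
      ((integral_lin3 h1.1 h2.1 h3.1 1 (-1) (-(2*I))).trans ?_)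
    rw [h1.2, h2.2, h3.2]
    simp only [J0val hb, J1val hb, J2val hb]
    linear_combination (Kb b^2 * ((4*dd b^2*(c1+c2)^2 + 2*dd b)
        - (4*dd b^2*((c1-c2)*I)^2 + 2*dd b)
        - 2*I*(2*dd b*(c1+c2))*(2*dd b*((c1-c2)*I)))) * hE_eq b c1 c2
      + (Kb b^2 * Complex.exp (4*dd b*(c1*c2))
          * (-4*dd b^2*(c1-c2)^2 - 8*dd b^2*(c1+c2)*(c1-c2))) * Complex.I_sq

lemma M11 {b : ℂ} (hb : b.re < 0) (c1 c2 : ℂ) :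
    Integrable (fun w : ℂ =>
      w * (starRingEnd ℂ) w
        * Complex.exp (b*(w * (starRingEnd ℂ) w) + c1*w + c2*(starRingEnd ℂ) w)) ∧
    ∫ w : ℂ, w * (starRingEnd ℂ) w
        * Complex.exp (b*(w * (starRingEnd ℂ) w) + c1*w + c2*(starRingEnd ℂ) w)
      = Kb b^2 * Complex.exp (4*dd b*(c1*c2)) * (16 * dd b^2 * (c1*c2) + 4 * dd b) := by
  have h1 := term_eval hb 2 0 (c1+c2) ((c1-c2)*I)
  have h2 := term_eval hb 0 2 (c1+c2) ((c1-c2)*I)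
  have hpt : ∀ pt : ℝ × ℝ,
      ((pt.1:ℂ)+(pt.2:ℂ)*I) * (starRingEnd ℂ) ((pt.1:ℂ)+(pt.2:ℂ)*I)
        * Complex.exp (b*((((pt.1:ℂ)+(pt.2:ℂ)*I)) * (starRingEnd ℂ) ((pt.1:ℂ)+(pt.2:ℂ)*I))
          + c1*((pt.1:ℂ)+(pt.2:ℂ)*I) + c2*(starRingEnd ℂ) ((pt.1:ℂ)+(pt.2:ℂ)*I))
      = (1:ℂ) * (((pt.1:ℂ)^2 * Complex.exp (b*pt.1^2 + (c1+c2)*pt.1))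
            * ((pt.2:ℂ)^0 * Complex.exp (b*pt.2^2 + ((c1-c2)*I)*pt.2)))
        + (1:ℂ) * (((pt.1:ℂ)^0 * Complex.exp (b*pt.1^2 + (c1+c2)*pt.1))
            * ((pt.2:ℂ)^2 * Complex.exp (b*pt.2^2 + ((c1-c2)*I)*pt.2))) := by
    intro pt
    rw [conj_mk, exp_split b c1 c2, Complex.exp_add]
    linear_combination (-(pt.2:ℂ)^2 * Complex.exp (b*(pt.1:ℂ)^2 + (c1+c2)*(pt.1:ℂ))
      * Complex.exp (b*(pt.2:ℂ)^2 + ((c1-c2)*I)*(pt.2:ℂ))) * Complex.I_sq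
  constructor
  · rw [integrable_c_iff]
    exact ((h1.1.const_mul 1).add (h2.1.const_mul 1)).congr
      (Filter.Eventually.of_forall fun pt => ((hpt pt).symm : _))
  · refine ((integral_c _).trans (MeasureTheory.integral_congr_ae
      (Filter.Eventually.of_forall hpt))).trans
      ((integral_lin2 h1.1 h2.1 1 1).trans ?_)
    rw [h1.2, h2.2]
    simp only [J0val hb, J2val hb]
    linear_combination (Kb b^2 * ((4*dd b^2*(c1+c2)^2 + 2*dd b)
        + (4*dd b^2*((c1-c2)*I)^2 + 2*dd b))) * hE_eq b c1 c2
      + (Kb b^2 * Complex.exp (4*dd b*(c1*c2)) * (4*dd b^2*(c1-c2)^2)) * Complex.I_sq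

lemma M22 {b : ℂ} (hb : b.re < 0) (c1 c2 : ℂ) :
    Integrable (fun w : ℂ =>
      w^2 * ((starRingEnd ℂ) w)^2
        * Complex.exp (b*(w * (starRingEnd ℂ) w) + c1*w + c2*(starRingEnd ℂ) w)) ∧
    ∫ w : ℂ, w^2 * ((starRingEnd ℂ) w)^2
        * Complex.exp (b*(w * (starRingEnd ℂ) w) + c1*w + c2*(starRingEnd ℂ) w)
      = Kb b^2 * Complex.exp (4*dd b*(c1*c2))
        * (256 * dd b^4 * (c1*c2)^2 + 256 * dd b^3 * (c1*c2) + 32 * dd b^2) := by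
  have h1 := term_eval hb 4 0 (c1+c2) ((c1-c2)*I)
  have h2 := term_eval hb 2 2 (c1+c2) ((c1-c2)*I)
  have h3 := term_eval hb 0 4 (c1+c2) ((c1-c2)*I)
  have hpt : ∀ pt : ℝ × ℝ,
      ((pt.1:ℂ)+(pt.2:ℂ)*I)^2 * ((starRingEnd ℂ) ((pt.1:ℂ)+(pt.2:ℂ)*I))^2
        * Complex.exp (b*((((pt.1:ℂ)+(pt.2:ℂ)*I)) * (starRingEnd ℂ) ((pt.1:ℂ)+(pt.2:ℂ)*I))
          + c1*((pt.1:ℂ)+(pt.2:ℂ)*I) + c2*(starRingEnd ℂ) ((pt.1:ℂ)+(pt.2:ℂ)*I))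
      = (1:ℂ) * (((pt.1:ℂ)^4 * Complex.exp (b*pt.1^2 + (c1+c2)*pt.1))
            * ((pt.2:ℂ)^0 * Complex.exp (b*pt.2^2 + ((c1-c2)*I)*pt.2)))
        + (2:ℂ) * (((pt.1:ℂ)^2 * Complex.exp (b*pt.1^2 + (c1+c2)*pt.1))
            * ((pt.2:ℂ)^2 * Complex.exp (b*pt.2^2 + ((c1-c2)*I)*pt.2)))
        + (1:ℂ) * (((pt.1:ℂ)^0 * Complex.exp (b*pt.1^2 + (c1+c2)*pt.1))
            * ((pt.2:ℂ)^4 * Complex.exp (b*pt.2^2 + ((c1-c2)*I)*pt.2))) := by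
    intro pt
    rw [conj_mk, exp_split b c1 c2, Complex.exp_add]
    linear_combination (((I^2-1)*(pt.2:ℂ)^4 - 2*(pt.1:ℂ)^2*(pt.2:ℂ)^2)
      * Complex.exp (b*(pt.1:ℂ)^2 + (c1+c2)*(pt.1:ℂ))
      * Complex.exp (b*(pt.2:ℂ)^2 + ((c1-c2)*I)*(pt.2:ℂ))) * Complex.I_sq
  constructor
  · rw [integrable_c_iff]
    exact (((h1.1.const_mul 1).add (h2.1.const_mul 2)).add (h3.1.const_mul 1)).congr
      (Filter.Eventually.of_forall fun pt => ((hpt pt).symm : _))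
  · refine ((integral_c _).trans (MeasureTheory.integral_congr_ae
      (Filter.Eventually.of_forall hpt))).trans
      ((integral_lin3 h1.1 h2.1 h3.1 1 2 1).trans ?_)
    rw [h1.2, h2.2, h3.2]
    simp only [J0val hb, J2val hb, J4val hb]
    linear_combination (Kb b^2 * ((16*dd b^4*(c1+c2)^4 + 48*dd b^3*(c1+c2)^2 + 12*dd b^2)
        + 2*(4*dd b^2*(c1+c2)^2 + 2*dd b)*(4*dd b^2*((c1-c2)*I)^2 + 2*dd b)
        + (16*dd b^4*((c1-c2)*I)^4 + 48*dd b^3*((c1-c2)*I)^2 + 12*dd b^2))) * hE_eq b c1 c2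
      + (Kb b^2 * Complex.exp (4*dd b*(c1*c2))
          * (16*dd b^4*(c1-c2)^4*(I^2-1) + 32*dd b^4*(c1+c2)^2*(c1-c2)^2
            + 64*dd b^3*(c1-c2)^2)) * Complex.I_sq

lemma M40 {b : ℂ} (hb : b.re < 0) :
    Integrable (fun w : ℂ => w^4 * Complex.exp (b*(w * (starRingEnd ℂ) w))) ∧
    ∫ w : ℂ, w^4 * Complex.exp (b*(w * (starRingEnd ℂ) w)) = 0 := by
  have h1 := term_eval hb 4 0 (0:ℂ) (0:ℂ)
  have h2 := term_eval hb 3 1 (0:ℂ) (0:ℂ)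
  have h3 := term_eval hb 2 2 (0:ℂ) (0:ℂ)
  have h4 := term_eval hb 1 3 (0:ℂ) (0:ℂ)
  have h5 := term_eval hb 0 4 (0:ℂ) (0:ℂ)
  have hpt : ∀ pt : ℝ × ℝ,
      ((pt.1:ℂ)+(pt.2:ℂ)*I)^4
        * Complex.exp (b*((((pt.1:ℂ)+(pt.2:ℂ)*I)) * (starRingEnd ℂ) ((pt.1:ℂ)+(pt.2:ℂ)*I)))
      = (1:ℂ) * (((pt.1:ℂ)^4 * Complex.exp (b*pt.1^2 + (0:ℂ)*pt.1))
            * ((pt.2:ℂ)^0 * Complex.exp (b*pt.2^2 + (0:ℂ)*pt.2)))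
        + (4*I) * (((pt.1:ℂ)^3 * Complex.exp (b*pt.1^2 + (0:ℂ)*pt.1))
            * ((pt.2:ℂ)^1 * Complex.exp (b*pt.2^2 + (0:ℂ)*pt.2)))
        + (-6:ℂ) * (((pt.1:ℂ)^2 * Complex.exp (b*pt.1^2 + (0:ℂ)*pt.1))
            * ((pt.2:ℂ)^2 * Complex.exp (b*pt.2^2 + (0:ℂ)*pt.2)))
        + (-(4*I)) * (((pt.1:ℂ)^1 * Complex.exp (b*pt.1^2 + (0:ℂ)*pt.1))
            * ((pt.2:ℂ)^3 * Complex.exp (b*pt.2^2 + (0:ℂ)*pt.2)))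
        + (1:ℂ) * (((pt.1:ℂ)^0 * Complex.exp (b*pt.1^2 + (0:ℂ)*pt.1))
            * ((pt.2:ℂ)^4 * Complex.exp (b*pt.2^2 + (0:ℂ)*pt.2))) := by
    intro pt
    rw [conj_mk, exp_split0 b, Complex.exp_add]
    linear_combination ((6*(pt.1:ℂ)^2*(pt.2:ℂ)^2 + 4*(pt.1:ℂ)*(pt.2:ℂ)^3*I
        + (pt.2:ℂ)^4*(I^2-1))
      * Complex.exp (b*(pt.1:ℂ)^2 + (0:ℂ)*(pt.1:ℂ))
      * Complex.exp (b*(pt.2:ℂ)^2 + (0:ℂ)*(pt.2:ℂ))) * Complex.I_sq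
  constructor
  · rw [integrable_c_iff]
    exact ((((((h1.1.const_mul 1).add (h2.1.const_mul (4*I))).add
      (h3.1.const_mul (-6))).add (h4.1.const_mul (-(4*I)))).add (h5.1.const_mul 1)).congr
      (Filter.Eventually.of_forall fun pt => ((hpt pt).symm : _)))
  · refine ((integral_c _).trans (MeasureTheory.integral_congr_ae
      (Filter.Eventually.of_forall hpt))).trans
      ((integral_lin5 h1.1 h2.1 h3.1 h4.1 h5.1 1 (4*I) (-6) (-(4*I)) 1).trans ?_)
    rw [h1.2, h2.2, h3.2, h4.2, h5.2]
    simp only [J0val hb, J1val hb, J2val hb, J3val hb, J4val hb]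
    ring

lemma M04 {b : ℂ} (hb : b.re < 0) :
    Integrable (fun w : ℂ => ((starRingEnd ℂ) w)^4 * Complex.exp (b*(w * (starRingEnd ℂ) w))) ∧
    ∫ w : ℂ, ((starRingEnd ℂ) w)^4 * Complex.exp (b*(w * (starRingEnd ℂ) w)) = 0 := by
  have h1 := term_eval hb 4 0 (0:ℂ) (0:ℂ)
  have h2 := term_eval hb 3 1 (0:ℂ) (0:ℂ)
  have h3 := term_eval hb 2 2 (0:ℂ) (0:ℂ)
  have h4 := term_eval hb 1 3 (0:ℂ) (0:ℂ)
  have h5 := term_eval hb 0 4 (0:ℂ) (0:ℂ)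
  have hpt : ∀ pt : ℝ × ℝ,
      ((starRingEnd ℂ) ((pt.1:ℂ)+(pt.2:ℂ)*I))^4
        * Complex.exp (b*((((pt.1:ℂ)+(pt.2:ℂ)*I)) * (starRingEnd ℂ) ((pt.1:ℂ)+(pt.2:ℂ)*I)))
      = (1:ℂ) * (((pt.1:ℂ)^4 * Complex.exp (b*pt.1^2 + (0:ℂ)*pt.1))
            * ((pt.2:ℂ)^0 * Complex.exp (b*pt.2^2 + (0:ℂ)*pt.2)))
        + (-(4*I)) * (((pt.1:ℂ)^3 * Complex.exp (b*pt.1^2 + (0:ℂ)*pt.1))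
            * ((pt.2:ℂ)^1 * Complex.exp (b*pt.2^2 + (0:ℂ)*pt.2)))
        + (-6:ℂ) * (((pt.1:ℂ)^2 * Complex.exp (b*pt.1^2 + (0:ℂ)*pt.1))
            * ((pt.2:ℂ)^2 * Complex.exp (b*pt.2^2 + (0:ℂ)*pt.2)))
        + (4*I) * (((pt.1:ℂ)^1 * Complex.exp (b*pt.1^2 + (0:ℂ)*pt.1))
            * ((pt.2:ℂ)^3 * Complex.exp (b*pt.2^2 + (0:ℂ)*pt.2)))
        + (1:ℂ) * (((pt.1:ℂ)^0 * Complex.exp (b*pt.1^2 + (0:ℂ)*pt.1))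
            * ((pt.2:ℂ)^4 * Complex.exp (b*pt.2^2 + (0:ℂ)*pt.2))) := by
    intro pt
    rw [conj_mk, exp_split0 b, Complex.exp_add]
    linear_combination ((6*(pt.1:ℂ)^2*(pt.2:ℂ)^2 - 4*(pt.1:ℂ)*(pt.2:ℂ)^3*I
        + (pt.2:ℂ)^4*(I^2-1))
      * Complex.exp (b*(pt.1:ℂ)^2 + (0:ℂ)*(pt.1:ℂ))
      * Complex.exp (b*(pt.2:ℂ)^2 + (0:ℂ)*(pt.2:ℂ))) * Complex.I_sq
  constructor
  · rw [integrable_c_iff]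
    exact ((((((h1.1.const_mul 1).add (h2.1.const_mul (-(4*I)))).add
      (h3.1.const_mul (-6))).add (h4.1.const_mul (4*I))).add (h5.1.const_mul 1)).congr
      (Filter.Eventually.of_forall fun pt => ((hpt pt).symm : _)))
  · refine ((integral_c _).trans (MeasureTheory.integral_congr_ae
      (Filter.Eventually.of_forall hpt))).trans
      ((integral_lin5 h1.1 h2.1 h3.1 h4.1 h5.1 1 (-(4*I)) (-6) (4*I) 1).trans ?_)
    rw [h1.2, h2.2, h3.2, h4.2, h5.2]
    simp only [J0val hb, J1val hb, J2val hb, J3val hb, J4val hb]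
    ring

/-! ### Assembly -/

lemma habs (u : ℂ) : ((‖u‖ : ℝ) : ℂ)^2 = u * (starRingEnd ℂ) u := by
  rw [← Complex.ofReal_pow, Complex.sq_norm]
  exact (Complex.mul_conj u).symm

lemma hb0_re : ((-1:ℂ)).re < 0 := by simp

lemma hK0 : Kb (-1:ℂ)^2 = (Real.pi : ℂ) := by
  rw [Kb_sq hb0_re]
  norm_num

lemma hd0 : dd (-1:ℂ) = 1/4 := by
  rw [dd]
  norm_num

lemma inner_val (a : ℝ) (z : ℂ) :
    (∫ w : ℂ, (z^2 - ((starRingEnd ℂ) w)^2) * (((starRingEnd ℂ) z)^2 - w^2)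
        * Complex.exp ((a:ℂ)*z*(starRingEnd ℂ) w + (starRingEnd ℂ) z*w
          - (‖z‖ : ℂ)^2 - (‖w‖ : ℂ)^2))
      = (Real.pi : ℂ) * Complex.exp (((a:ℂ)-1)*(z*(starRingEnd ℂ) z))
        * ((1+(a:ℂ)^2)*(z^2*((starRingEnd ℂ) z)^2) + 4*(a:ℂ)*(z*(starRingEnd ℂ) z) + 2
          - (a:ℂ)^2*z^4 - ((starRingEnd ℂ) z)^4) := by
  have m00 := M00 hb0_re ((starRingEnd ℂ) z) ((a:ℂ)*z)
  have m20 := M20 hb0_re ((starRingEnd ℂ) z) ((a:ℂ)*z)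
  have m02 := M02 hb0_re ((starRingEnd ℂ) z) ((a:ℂ)*z)
  have m22 := M22 hb0_re ((starRingEnd ℂ) z) ((a:ℂ)*z)
  have hpt : ∀ w : ℂ,
      (z^2 - ((starRingEnd ℂ) w)^2) * (((starRingEnd ℂ) z)^2 - w^2)
        * Complex.exp ((a:ℂ)*z*(starRingEnd ℂ) w + (starRingEnd ℂ) z*w
          - (‖z‖ : ℂ)^2 - (‖w‖ : ℂ)^2)
      = Complex.exp (-(z*(starRingEnd ℂ) z)) *
          ((z^2*((starRingEnd ℂ) z)^2)
              * Complex.exp ((-1:ℂ)*(w * (starRingEnd ℂ) w) + (starRingEnd ℂ) z*w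
                + (a:ℂ)*z*(starRingEnd ℂ) w)
            + (-(z^2)) * (w^2
              * Complex.exp ((-1:ℂ)*(w * (starRingEnd ℂ) w) + (starRingEnd ℂ) z*w
                + (a:ℂ)*z*(starRingEnd ℂ) w))
            + (-(((starRingEnd ℂ) z)^2)) * (((starRingEnd ℂ) w)^2
              * Complex.exp ((-1:ℂ)*(w * (starRingEnd ℂ) w) + (starRingEnd ℂ) z*w
                + (a:ℂ)*z*(starRingEnd ℂ) w))
            + (1:ℂ) * (w^2 * ((starRingEnd ℂ) w)^2
              * Complex.exp ((-1:ℂ)*(w * (starRingEnd ℂ) w) + (starRingEnd ℂ) z*w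
                + (a:ℂ)*z*(starRingEnd ℂ) w))) := by
    intro w
    rw [habs z, habs w, show (a:ℂ)*z*(starRingEnd ℂ) w + (starRingEnd ℂ) z*w
        - z*(starRingEnd ℂ) z - w*(starRingEnd ℂ) w
        = (-(z*(starRingEnd ℂ) z)) + ((-1:ℂ)*(w * (starRingEnd ℂ) w) + (starRingEnd ℂ) z*w
            + (a:ℂ)*z*(starRingEnd ℂ) w) from by ring,
      Complex.exp_add]
    ring
  refine (MeasureTheory.integral_congr_ae (Filter.Eventually.of_forall hpt)).trans ?_
  rw [integral_const_mul _ _,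
    integral_lin4 m00.1 m20.1 m02.1 m22.1 (z^2*((starRingEnd ℂ) z)^2) (-(z^2))
      (-(((starRingEnd ℂ) z)^2)) 1,
    m00.2, m20.2, m02.2, m22.2]
  simp only [hK0, hd0]
  have hEE : Complex.exp (-(z*(starRingEnd ℂ) z))
      * Complex.exp (4*(1/4:ℂ)*((starRingEnd ℂ) z*((a:ℂ)*z)))
      = Complex.exp (((a:ℂ)-1)*(z*(starRingEnd ℂ) z)) := by
    rw [← Complex.exp_add]
    congr 1
    ring
  linear_combination ((Real.pi:ℂ) * ((1+(a:ℂ)^2)*(z^2*((starRingEnd ℂ) z)^2)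
      + 4*(a:ℂ)*(z*(starRingEnd ℂ) z) + 2 - (a:ℂ)^2*z^4 - ((starRingEnd ℂ) z)^4)) * hEE

lemma outer_val {a : ℝ} (ha : |a| < 1) :
    (∫ z : ℂ, (Real.pi : ℂ) * Complex.exp (((a:ℂ)-1)*(z*(starRingEnd ℂ) z))
        * ((1+(a:ℂ)^2)*(z^2*((starRingEnd ℂ) z)^2) + 4*(a:ℂ)*(z*(starRingEnd ℂ) z) + 2
          - (a:ℂ)^2*z^4 - ((starRingEnd ℂ) z)^4))
      = (Real.pi:ℂ)^2 * 4 / (1-(a:ℂ))^3 := by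
  have ha1 : a < 1 := (abs_lt.mp ha).2
  have hb' : (((a:ℂ)-1)).re < 0 := by
    simp only [Complex.sub_re, Complex.ofReal_re, Complex.one_re]
    linarith
  have m22 := M22 hb' 0 0
  have m11 := M11 hb' 0 0
  have m00 := M00 hb' 0 0
  have m40 := M40 hb'
  have m04 := M04 hb'
  have hpt : ∀ z : ℂ,
      (Real.pi : ℂ) * Complex.exp (((a:ℂ)-1)*(z*(starRingEnd ℂ) z))
        * ((1+(a:ℂ)^2)*(z^2*((starRingEnd ℂ) z)^2) + 4*(a:ℂ)*(z*(starRingEnd ℂ) z) + 2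
          - (a:ℂ)^2*z^4 - ((starRingEnd ℂ) z)^4)
      = (Real.pi : ℂ) *
          ((1+(a:ℂ)^2) * (z^2*((starRingEnd ℂ) z)^2
              * Complex.exp (((a:ℂ)-1)*(z * (starRingEnd ℂ) z) + 0*z + 0*(starRingEnd ℂ) z))
            + (4*(a:ℂ)) * (z*(starRingEnd ℂ) z
              * Complex.exp (((a:ℂ)-1)*(z * (starRingEnd ℂ) z) + 0*z + 0*(starRingEnd ℂ) z))
            + (2:ℂ) * (Complex.exp (((a:ℂ)-1)*(z * (starRingEnd ℂ) z) + 0*z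
                + 0*(starRingEnd ℂ) z))
            + (-((a:ℂ)^2)) * (z^4 * Complex.exp (((a:ℂ)-1)*(z * (starRingEnd ℂ) z)))
            + (-1:ℂ) * (((starRingEnd ℂ) z)^4
              * Complex.exp (((a:ℂ)-1)*(z * (starRingEnd ℂ) z)))) := by
    intro z
    have e1 : Complex.exp (((a:ℂ)-1)*(z * (starRingEnd ℂ) z) + 0*z + 0*(starRingEnd ℂ) z)
        = Complex.exp (((a:ℂ)-1)*(z*(starRingEnd ℂ) z)) := by
      congr 1
      ring
    rw [e1]
    ring
  refine (MeasureTheory.integral_congr_ae (Filter.Eventually.of_forall hpt)).trans ?_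
  rw [integral_const_mul _ _,
    integral_lin5 m22.1 m11.1 m00.1 m40.1 m04.1 (1+(a:ℂ)^2) (4*(a:ℂ)) 2 (-((a:ℂ)^2)) (-1),
    m22.2, m11.2, m00.2, m40.2, m04.2]
  have hπ : (Real.pi : ℂ) ≠ 0 := by exact_mod_cast Real.pi_ne_zero
  have hne : (a:ℂ) - 1 ≠ 0 := by
    rw [sub_ne_zero]
    exact_mod_cast ne_of_lt ha1
  have hne' : (1:ℂ) - (a:ℂ) ≠ 0 := by
    rw [sub_ne_zero]
    exact_mod_cast (ne_of_lt ha1).symm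
  have hdd : dd ((a:ℂ)-1) = (1/4) * (1-(a:ℂ))⁻¹ := by
    rw [dd]
    field_simp
    ring
  have hKb : (Real.pi:ℂ) / -((a:ℂ)-1) = (Real.pi:ℂ) * (1-(a:ℂ))⁻¹ := by
    rw [neg_sub, div_eq_mul_inv]
  simp only [Kb_sq hb', hdd, hKb, mul_zero, zero_mul, Complex.exp_zero]
  have hx : (1-(a:ℂ)) * (1-(a:ℂ))⁻¹ = 1 := mul_inv_cancel₀ hne'
  rw [show (Real.pi:ℂ)^2*4/(1-(a:ℂ))^3 = (Real.pi:ℂ)^2*4*((1-(a:ℂ))⁻¹)^3 from by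
    rw [div_eq_mul_inv, ← inv_pow]]
  linear_combination (-2*(Real.pi:ℂ)^2*(1-(a:ℂ))⁻¹*(((a:ℂ)+1)*(1-(a:ℂ))⁻¹+1)) * hx

lemma psi_integrable {ε : ℝ} (hε : 0 < ε) :
    Integrable (fun x : ℝ => (1+x^2)^2 * Real.exp (-ε*x^2)) := by
  have h0 := integrable_aux (show -ε < 0 by linarith) 0 0
  have h2 := integrable_aux (show -ε < 0 by linarith) 2 0
  have h4 := integrable_aux (show -ε < 0 by linarith) 4 0
  refine ((h0.add (h2.const_mul 2)).add h4).congr (Filter.Eventually.of_forall fun x => ?_)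
  simp only [Pi.add_apply, zero_mul, add_zero, pow_zero, one_mul]
  rw [show |x|^2 = x^2 from _root_.sq_abs x, show |x|^4 = x^4 from by
    rw [show (4:ℕ) = 2*2 from rfl, pow_mul, pow_mul, _root_.sq_abs]]
  ring

lemma habs2 (x y : ℝ) : ‖(x:ℂ)+(y:ℂ)*I‖^2 = x^2+y^2 := by
  rw [Complex.sq_norm, Complex.normSq_add_mul_I]

lemma phi_integrable {ε : ℝ} (hε : 0 < ε) :
    Integrable (fun z : ℂ => (1+‖z‖^2)^2 * Real.exp (-ε*‖z‖^2)) := by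
  rw [integrable_c_iff]
  have hψ := psi_integrable hε
  have hprod : Integrable (fun pt : ℝ×ℝ =>
      ((1+pt.1^2)^2 * Real.exp (-ε*pt.1^2)) * ((1+pt.2^2)^2 * Real.exp (-ε*pt.2^2))) := by
    rw [Measure.volume_eq_prod]
    exact hψ.mul_prod hψ
  refine hprod.mono' ?_ (Filter.Eventually.of_forall fun pt => ?_)
  · apply Continuous.aestronglyMeasurable
    have hc : Continuous fun pt : ℝ×ℝ => (pt.1:ℂ)+(pt.2:ℂ)*I := by continuity
    exact ((continuous_const.add ((continuous_norm.comp hc).pow 2)).pow 2).mul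
      (Real.continuous_exp.comp (continuous_const.mul ((continuous_norm.comp hc).pow 2)))
  · rw [Real.norm_eq_abs, _root_.abs_of_nonneg (by positivity), habs2]
    rw [show -ε*(pt.1^2+pt.2^2) = -ε*pt.1^2 + -ε*pt.2^2 by ring, Real.exp_add]
    calc (1+(pt.1^2+pt.2^2))^2 * (Real.exp (-ε*pt.1^2) * Real.exp (-ε*pt.2^2))
        ≤ ((1+pt.1^2)*(1+pt.2^2))^2 * (Real.exp (-ε*pt.1^2) * Real.exp (-ε*pt.2^2)) := by
          apply mul_le_mul_of_nonneg_right _ (by positivity)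
          have h1 : (1+(pt.1^2+pt.2^2)) ≤ (1+pt.1^2)*(1+pt.2^2) := by nlinarith [sq_nonneg (pt.1*pt.2)]
          have h0 : (0:ℝ) ≤ 1+(pt.1^2+pt.2^2) := by positivity
          exact pow_le_pow_left₀ h0 h1 2
      _ = ((1+pt.1^2)^2*Real.exp (-ε*pt.1^2)) * ((1+pt.2^2)^2*Real.exp (-ε*pt.2^2)) := by ring

lemma main_integrable (a : ℝ) (ha : |a| < 1) :
    Integrable (fun p : ℂ × ℂ =>
        (p.1 ^ 2 - (starRingEnd ℂ) p.2 ^ 2) * ((starRingEnd ℂ) p.1 ^ 2 - p.2 ^ 2) *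
          Complex.exp ((a : ℂ) * p.1 * (starRingEnd ℂ) p.2 + (starRingEnd ℂ) p.1 * p.2
            - (‖p.1‖ : ℂ) ^ 2 - (‖p.2‖ : ℂ) ^ 2)) := by
  have hε : 0 < (1-|a|)/2 := by linarith
  have hφ := phi_integrable hε
  have hprod : Integrable (fun p : ℂ × ℂ =>
      ((1+‖p.1‖^2)^2 * Real.exp (-((1-|a|)/2)*‖p.1‖^2))
        * ((1+‖p.2‖^2)^2 * Real.exp (-((1-|a|)/2)*‖p.2‖^2))) := by
    rw [Measure.volume_eq_prod]
    exact hφ.mul_prod hφ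
  refine hprod.mono' ?_ (Filter.Eventually.of_forall fun p => ?_)
  · apply Continuous.aestronglyMeasurable
    have hconj : Continuous fun w : ℂ => (starRingEnd ℂ) w := Complex.continuous_conj
    have h1 : Continuous fun p : ℂ × ℂ => (p.1 ^ 2 - (starRingEnd ℂ) p.2 ^ 2)
        * ((starRingEnd ℂ) p.1 ^ 2 - p.2 ^ 2) :=
      (((continuous_fst.pow 2).sub ((hconj.comp continuous_snd).pow 2)).mul
        (((hconj.comp continuous_fst).pow 2).sub (continuous_snd.pow 2)))
    have h2 : Continuous fun p : ℂ × ℂ => Complex.exp ((a : ℂ) * p.1 * (starRingEnd ℂ) p.2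
        + (starRingEnd ℂ) p.1 * p.2
        - (‖p.1‖ : ℂ) ^ 2 - (‖p.2‖ : ℂ) ^ 2) := by
      apply Complex.continuous_exp.comp
      apply Continuous.sub
      apply Continuous.sub
      · exact ((continuous_const.mul continuous_fst).mul (hconj.comp continuous_snd)).add
          ((hconj.comp continuous_fst).mul continuous_snd)
      · exact (Complex.continuous_ofReal.comp (continuous_norm.comp continuous_fst)).pow 2
      · exact (Complex.continuous_ofReal.comp (continuous_norm.comp continuous_snd)).pow 2
    exact h1.mul h2
  · obtain ⟨z, w⟩ := p
    show ‖(z ^ 2 - (starRingEnd ℂ) w ^ 2) * ((starRingEnd ℂ) z ^ 2 - w ^ 2) *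
        Complex.exp ((a : ℂ) * z * (starRingEnd ℂ) w + (starRingEnd ℂ) z * w
          - (‖z‖ : ℂ) ^ 2 - (‖w‖ : ℂ) ^ 2)‖
      ≤ (1+‖z‖^2)^2 * Real.exp (-((1-|a|)/2)*‖z‖^2)
        * ((1+‖w‖^2)^2 * Real.exp (-((1-|a|)/2)*‖w‖^2))
    have e1 : ‖z ^ 2 - (starRingEnd ℂ) w ^ 2‖ ≤ ‖z‖^2 + ‖w‖^2 := by
      refine (norm_sub_le _ _).trans (le_of_eq ?_)
      rw [norm_pow, norm_pow, Complex.norm_conj]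
    have e2 : ‖(starRingEnd ℂ) z ^ 2 - w ^ 2‖ ≤ ‖z‖^2 + ‖w‖^2 := by
      refine (norm_sub_le _ _).trans (le_of_eq ?_)
      rw [norm_pow, norm_pow, Complex.norm_conj]
    have e3 : ‖Complex.exp ((a : ℂ) * z * (starRingEnd ℂ) w + (starRingEnd ℂ) z * w
          - (‖z‖ : ℂ) ^ 2 - (‖w‖ : ℂ) ^ 2)‖
        ≤ Real.exp (-((1-|a|)/2)*‖z‖^2 + -((1-|a|)/2)*‖w‖^2) := by
      rw [Complex.norm_exp]
      apply Real.exp_le_exp.mpr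
      have hre : ((a : ℂ) * z * (starRingEnd ℂ) w + (starRingEnd ℂ) z * w
          - (‖z‖ : ℂ) ^ 2 - (‖w‖ : ℂ) ^ 2).re
          = ((a : ℂ) * z * (starRingEnd ℂ) w).re + ((starRingEnd ℂ) z * w).re
            - ‖z‖^2 - ‖w‖^2 := by
        simp [Complex.sub_re, Complex.add_re, ← Complex.ofReal_pow]
      rw [hre]
      have f1 : ((a:ℂ) * z * (starRingEnd ℂ) w).re ≤ |a| * ‖z‖ * ‖w‖ := by
        have h := Complex.re_le_norm ((a:ℂ) * z * (starRingEnd ℂ) w)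
        rwa [norm_mul, norm_mul, Complex.norm_conj, Complex.norm_real, Real.norm_eq_abs] at h
      have f2 : ((starRingEnd ℂ) z * w).re ≤ ‖z‖ * ‖w‖ := by
        have h := Complex.re_le_norm ((starRingEnd ℂ) z * w)
        rwa [norm_mul, Complex.norm_conj] at h
      nlinarith [mul_nonneg (show (0:ℝ) ≤ 1+|a| by positivity)
        (sq_nonneg (‖z‖ - ‖w‖)), abs_nonneg a,
        norm_nonneg z, norm_nonneg w]
    have base : ‖z‖^2 + ‖w‖^2
        ≤ (1+‖z‖^2)*(1+‖w‖^2) := by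
      nlinarith [sq_nonneg (‖z‖ * ‖w‖), norm_nonneg z,
        norm_nonneg w]
    have hx0 : (0:ℝ) ≤ ‖z‖^2 + ‖w‖^2 := by positivity
    have h1 : (‖z‖^2 + ‖w‖^2) * (‖z‖^2 + ‖w‖^2)
        ≤ ((1+‖z‖^2)*(1+‖w‖^2))^2 := by
      rw [show ((1+‖z‖^2)*(1+‖w‖^2))^2
          = ((1+‖z‖^2)*(1+‖w‖^2))*((1+‖z‖^2)*(1+‖w‖^2))
          from pow_two _]
      exact mul_le_mul base base hx0 (hx0.trans base)
    rw [norm_mul, norm_mul]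
    calc ‖z ^ 2 - (starRingEnd ℂ) w ^ 2‖ * ‖(starRingEnd ℂ) z ^ 2 - w ^ 2‖ *
          ‖Complex.exp ((a : ℂ) * z * (starRingEnd ℂ) w + (starRingEnd ℂ) z * w
            - (‖z‖ : ℂ) ^ 2 - (‖w‖ : ℂ) ^ 2)‖
        ≤ ((‖z‖^2 + ‖w‖^2) * (‖z‖^2 + ‖w‖^2))
            * Real.exp (-((1-|a|)/2)*‖z‖^2 + -((1-|a|)/2)*‖w‖^2) :=
          mul_le_mul (mul_le_mul e1 e2 (norm_nonneg _) (by positivity)) e3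
            (norm_nonneg _) (by positivity)
      _ ≤ (1+‖z‖^2)^2 * Real.exp (-((1-|a|)/2)*‖z‖^2)
            * ((1+‖w‖^2)^2 * Real.exp (-((1-|a|)/2)*‖w‖^2)) := by
          rw [Real.exp_add]
          calc (‖z‖^2 + ‖w‖^2) * (‖z‖^2 + ‖w‖^2)
                * (Real.exp (-((1-|a|)/2)*‖z‖^2)
                  * Real.exp (-((1-|a|)/2)*‖w‖^2))
              ≤ ((1+‖z‖^2)*(1+‖w‖^2))^2
                * (Real.exp (-((1-|a|)/2)*‖z‖^2)
                  * Real.exp (-((1-|a|)/2)*‖w‖^2)) :=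
                mul_le_mul_of_nonneg_right h1 (by positivity)
            _ = (1+‖z‖^2)^2 * Real.exp (-((1-|a|)/2)*‖z‖^2)
                * ((1+‖w‖^2)^2 * Real.exp (-((1-|a|)/2)*‖w‖^2)) := by
                ring

end Stmt5Aux


open Stmt5Aux in
/-- Gaussian integral over ℂ²:
`(1/π²) ∫∫ (z² − w̄²)(z̄² − w²) exp(a z w̄ + z̄ w − |z|² − |w|²) d²z d²w = 4/(1 − a)³`
for `|a| < 1`. -/
theorem stmt_5 (a : ℝ) (ha : |a| < 1) :
    Integrable (fun p : ℂ × ℂ =>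
        (p.1 ^ 2 - (starRingEnd ℂ) p.2 ^ 2) * ((starRingEnd ℂ) p.1 ^ 2 - p.2 ^ 2) *
          Complex.exp ((a : ℂ) * p.1 * (starRingEnd ℂ) p.2 + (starRingEnd ℂ) p.1 * p.2
            - (‖p.1‖ : ℂ) ^ 2 - (‖p.2‖ : ℂ) ^ 2)) ∧
      (1 / (Real.pi : ℂ) ^ 2) *
          ∫ p : ℂ × ℂ,
            (p.1 ^ 2 - (starRingEnd ℂ) p.2 ^ 2) * ((starRingEnd ℂ) p.1 ^ 2 - p.2 ^ 2) *
              Complex.exp ((a : ℂ) * p.1 * (starRingEnd ℂ) p.2 + (starRingEnd ℂ) p.1 * p.2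
                - (‖p.1‖ : ℂ) ^ 2 - (‖p.2‖ : ℂ) ^ 2) =
        4 / (1 - (a : ℂ)) ^ 3 := by
  have hint := main_integrable a ha
  refine ⟨hint, ?_⟩
  have hint' : Integrable (fun p : ℂ × ℂ =>
      (p.1 ^ 2 - (starRingEnd ℂ) p.2 ^ 2) * ((starRingEnd ℂ) p.1 ^ 2 - p.2 ^ 2) *
        Complex.exp ((a : ℂ) * p.1 * (starRingEnd ℂ) p.2 + (starRingEnd ℂ) p.1 * p.2
          - (‖p.1‖ : ℂ) ^ 2 - (‖p.2‖ : ℂ) ^ 2))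
      ((volume : Measure ℂ).prod (volume : Measure ℂ)) := by
    rwa [← Measure.volume_eq_prod]
  have hiter := MeasureTheory.integral_prod _ hint'
  have hval : (∫ p : ℂ × ℂ,
      (p.1 ^ 2 - (starRingEnd ℂ) p.2 ^ 2) * ((starRingEnd ℂ) p.1 ^ 2 - p.2 ^ 2) *
        Complex.exp ((a : ℂ) * p.1 * (starRingEnd ℂ) p.2 + (starRingEnd ℂ) p.1 * p.2
          - (‖p.1‖ : ℂ) ^ 2 - (‖p.2‖ : ℂ) ^ 2))
      = (Real.pi:ℂ)^2 * 4 / (1-(a:ℂ))^3 := by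
    rw [Measure.volume_eq_prod, hiter]
    exact (MeasureTheory.integral_congr_ae
      (Filter.Eventually.of_forall fun z => inner_val a z)).trans (outer_val ha)
  rw [hval]
  have hπ : (Real.pi : ℂ) ≠ 0 := by exact_mod_cast Real.pi_ne_zero
  field_simp
end
end

section
/- Let C be a real 2×2 matrix, S a real 2×2 matrix with det S = 1, ν₂ > 0, and set V_i := ν₂·S·Sᵀ. Let dV be the real 4×4 block matrix with zero diagonal 2×2 blocks, top-right block D := C·(Sᵀ)⁻¹ and bottom-left block Dᵀ. With the 4×4 matrices S₁₂ := E_{41}+E_{32}+E_{23}+E_{14}, T₁₂ := E_{31}−E_{42}+E_{13}−E_{24}, A₁₂ := E_{41}−E_{32}−E_{23}+E_{14}, B₁₂ := E_{31}+E_{42}+E_{13}+E_{24} (where E_{ij} is the matrix with a single 1 in entry (i,j)), it holds that Tr(dV·S₁₂)² + Tr(dV·T₁₂)² + Tr(dV·A₁₂)² + Tr(dV·B₁₂)² = 8·ν₂·Tr(C·V_i⁻¹·Cᵀ). -/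
open Matrix

/-- Trace identity (Appendix B):
`Tr(dV S₁₂)² + Tr(dV T₁₂)² + Tr(dV A₁₂)² + Tr(dV B₁₂)² = 8 ν₂ Tr(C V_i⁻¹ Cᵀ)`,
where `V_i = ν₂ S Sᵀ` with `det S = 1` and `dV` has off-diagonal blocks `D = C (Sᵀ)⁻¹`
and `Dᵀ`. -/
theorem stmt_8 (C S : Matrix (Fin 2) (Fin 2) ℝ) (hS : S.det = 1) (ν₂ : ℝ) (hν : 0 < ν₂)
    (Vi : Matrix (Fin 2) (Fin 2) ℝ) (hVi : Vi = ν₂ • (S * Sᵀ))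
    (D : Matrix (Fin 2) (Fin 2) ℝ) (hD : D = C * (Sᵀ)⁻¹)
    (dV : Matrix (Fin 4) (Fin 4) ℝ)
    (hdV : dV = !![0, 0, D 0 0, D 0 1;
                   0, 0, D 1 0, D 1 1;
                   D 0 0, D 1 0, 0, 0;
                   D 0 1, D 1 1, 0, 0])
    (S12 T12 A12 B12 : Matrix (Fin 4) (Fin 4) ℝ)
    (hS12 : S12 = Matrix.single 3 0 1 + Matrix.single 2 1 1 +
      Matrix.single 1 2 1 + Matrix.single 0 3 1)
    (hT12 : T12 = Matrix.single 2 0 1 - Matrix.single 3 1 1 +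
      Matrix.single 0 2 1 - Matrix.single 1 3 1)
    (hA12 : A12 = Matrix.single 3 0 1 - Matrix.single 2 1 1 -
      Matrix.single 1 2 1 + Matrix.single 0 3 1)
    (hB12 : B12 = Matrix.single 2 0 1 + Matrix.single 3 1 1 +
      Matrix.single 0 2 1 + Matrix.single 1 3 1) :
    (dV * S12).trace ^ 2 + (dV * T12).trace ^ 2 + (dV * A12).trace ^ 2 + (dV * B12).trace ^ 2 =
      8 * ν₂ * (C * Vi⁻¹ * Cᵀ).trace := by
  have hSinv : IsUnit S.det := by rw [hS]; exact isUnit_one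
  have hSTinv : IsUnit Sᵀ.det := by rw [Matrix.det_transpose, hS]; exact isUnit_one
  have h1 : Vi⁻¹ = ν₂⁻¹ • ((Sᵀ)⁻¹ * S⁻¹) := by
    rw [hVi]
    apply Matrix.inv_eq_right_inv
    rw [Matrix.smul_mul, Matrix.mul_smul, smul_smul, mul_inv_cancel₀ hν.ne', one_smul,
      Matrix.mul_assoc, ← Matrix.mul_assoc Sᵀ, Matrix.mul_nonsing_inv _ hSTinv,
      Matrix.one_mul, Matrix.mul_nonsing_inv _ hSinv]
  have h2 : Dᵀ = S⁻¹ * Cᵀ := by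
    rw [hD, Matrix.transpose_mul, Matrix.transpose_nonsing_inv, Matrix.transpose_transpose]
  have hrhs : C * Vi⁻¹ * Cᵀ = ν₂⁻¹ • (D * Dᵀ) := by
    rw [h1, h2, hD]
    simp only [Matrix.mul_smul, Matrix.smul_mul, Matrix.mul_assoc]
  rw [hrhs, Matrix.trace_smul]
  have hL : (dV * S12).trace = 2 * (D 0 1 + D 1 0) := by
    subst hdV hS12
    simp [Matrix.trace, Matrix.diag, Matrix.mul_apply, Fin.sum_univ_four,
      Matrix.single, Matrix.of_apply]
    ring
  have hT : (dV * T12).trace = 2 * (D 0 0 - D 1 1) := by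
    subst hdV hT12
    simp [Matrix.trace, Matrix.diag, Matrix.mul_apply, Fin.sum_univ_four,
      Matrix.single, Matrix.of_apply]
    ring
  have hA : (dV * A12).trace = 2 * (D 0 1 - D 1 0) := by
    subst hdV hA12
    simp [Matrix.trace, Matrix.diag, Matrix.mul_apply, Fin.sum_univ_four,
      Matrix.single, Matrix.of_apply]
    ring
  have hB : (dV * B12).trace = 2 * (D 0 0 + D 1 1) := by
    subst hdV hB12
    simp [Matrix.trace, Matrix.diag, Matrix.mul_apply, Fin.sum_univ_four,
      Matrix.single, Matrix.of_apply]
    ring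
  have hDD : (D * Dᵀ).trace = D 0 0 ^ 2 + D 0 1 ^ 2 + D 1 0 ^ 2 + D 1 1 ^ 2 := by
    simp [Matrix.trace_fin_two, Matrix.mul_apply, Fin.sum_univ_two, Matrix.transpose_apply]
    ring
  rw [hL, hT, hA, hB, hDD]
  rw [smul_eq_mul]
  field_simp
  ring
end

section
/- The function (N_S, N_B) ↦ (1 + N_S)·(√N_B + √(1+N_B))² / (√(N_B·N_S) + √((1+N_B)(1+N_S)))² tends to 4 along the product filter where N_S → 0 from the right and N_B → ∞. -/
open Filter

/-- The ratio `γ_col^{TMSV}/γ_col^{CI}` tends to 4 (the 6 dB collective advantage) in the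
regime `N_S → 0⁺`, `N_B → ∞`. -/
theorem stmt_13 :
    Tendsto
      (fun p : ℝ × ℝ =>
        (1 + p.1) * (Real.sqrt p.2 + Real.sqrt (1 + p.2)) ^ 2 /
          (Real.sqrt (p.2 * p.1) + Real.sqrt ((1 + p.2) * (1 + p.1))) ^ 2)
      ((nhdsWithin 0 (Set.Ioi 0)) ×ˢ atTop) (nhds 4) := by
  set g : ℝ × ℝ → ℝ := fun q =>
    (1 + q.1) * (1 + Real.sqrt (1 + q.2)) ^ 2 /
      (Real.sqrt q.1 + Real.sqrt ((1 + q.2) * (1 + q.1))) ^ 2 with hgdef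
  have hg : ContinuousAt g (0, 0) := by
    apply ContinuousAt.div
    · fun_prop
    · fun_prop
    · norm_num
  have hmap : Tendsto (fun p : ℝ × ℝ => (p.1, p.2⁻¹))
      ((nhdsWithin (0:ℝ) (Set.Ioi 0)) ×ˢ atTop) (nhds ((0:ℝ), (0:ℝ))) := by
    rw [nhds_prod_eq]
    exact (tendsto_fst.mono_right nhdsWithin_le_nhds).prodMk
      (tendsto_inv_atTop_zero.comp tendsto_snd)
  have key : Tendsto (fun p : ℝ × ℝ => g (p.1, p.2⁻¹))
      ((nhdsWithin (0:ℝ) (Set.Ioi 0)) ×ˢ atTop) (nhds 4) := by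
    have h4 : g 0 = 4 := by simp [hgdef]; norm_num
    simpa [h4, Function.comp_def, Prod.mk_zero_zero] using hg.tendsto.comp hmap
  refine key.congr' ?_
  filter_upwards [Filter.prod_mem_prod (self_mem_nhdsWithin)
    (Ioi_mem_atTop (0:ℝ))] with p hp
  obtain ⟨hs, hb⟩ := hp
  simp only [Set.mem_Ioi] at hs hb
  have hb0 : (0:ℝ) ≤ p.2 := hb.le
  have hbne : p.2 ≠ 0 := hb.ne'
  have hsb : Real.sqrt p.2 ≠ 0 := by positivity
  have k1 : 1 + p.2 = p.2 * (1 + p.2⁻¹) := by field_simp; ring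
  have h1 : Real.sqrt (1 + p.2) = Real.sqrt p.2 * Real.sqrt (1 + p.2⁻¹) := by
    rw [k1, Real.sqrt_mul hb0]
  have h2 : Real.sqrt (p.2 * p.1) = Real.sqrt p.2 * Real.sqrt p.1 :=
    Real.sqrt_mul hb0 _
  have h3 : Real.sqrt ((1 + p.2) * (1 + p.1))
      = Real.sqrt p.2 * Real.sqrt ((1 + p.2⁻¹) * (1 + p.1)) := by
    have k3 : (1 + p.2) * (1 + p.1) = p.2 * ((1 + p.2⁻¹) * (1 + p.1)) := by
      rw [← mul_assoc, ← k1]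
    rw [k3, Real.sqrt_mul hb0]
  simp only [hgdef]
  rw [h1, h2, h3]
  have e1 : (1 + p.1) * (Real.sqrt p.2 + Real.sqrt p.2 * Real.sqrt (1 + p.2⁻¹)) ^ 2
      = Real.sqrt p.2 ^ 2 * ((1 + p.1) * (1 + Real.sqrt (1 + p.2⁻¹)) ^ 2) := by ring
  have e2 : (Real.sqrt p.2 * Real.sqrt p.1
        + Real.sqrt p.2 * Real.sqrt ((1 + p.2⁻¹) * (1 + p.1))) ^ 2
      = Real.sqrt p.2 ^ 2 * (Real.sqrt p.1 + Real.sqrt ((1 + p.2⁻¹) * (1 + p.1))) ^ 2 := by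
    ring
  rw [e1, e2, mul_div_mul_left _ _ (pow_ne_zero 2 hsb)]
end

section
/- For all real numbers N_S > 0 and N_B > 0, 1 < (1 + N_S)(1 + 2N_B) / (1 + N_B + N_S + 2·N_B·N_S) < 2. -/
/-- The local quantum advantage ratio `γ_loc^{TMSV}/γ_loc^{CI}` is strictly between 1 and 2. -/
theorem stmt_17 (N_S N_B : ℝ) (hNS : 0 < N_S) (hNB : 0 < N_B) :
    1 < (1 + N_S) * (1 + 2 * N_B) / (1 + N_B + N_S + 2 * N_B * N_S) ∧
      (1 + N_S) * (1 + 2 * N_B) / (1 + N_B + N_S + 2 * N_B * N_S) < 2 := by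
  have hd : 0 < 1 + N_B + N_S + 2 * N_B * N_S := by positivity
  constructor
  · rw [lt_div_iff₀ hd]; nlinarith
  · rw [div_lt_iff₀ hd]; nlinarith
end

section
/- For all real numbers N_S > 0 and N_B > 0, 1 < (1 + N_S)·(√N_B + √(1+N_B))² / (√(N_B·N_S) + √((1+N_B)(1+N_S)))² < 4. -/
/-- The collective quantum advantage ratio `γ_col^{TMSV}/γ_col^{CI}` is strictly between
1 and 4. -/
theorem stmt_18 (N_S N_B : ℝ) (hNS : 0 < N_S) (hNB : 0 < N_B) :
    1 < (1 + N_S) * (Real.sqrt N_B + Real.sqrt (1 + N_B)) ^ 2 /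
          (Real.sqrt (N_B * N_S) + Real.sqrt ((1 + N_B) * (1 + N_S))) ^ 2 ∧
      (1 + N_S) * (Real.sqrt N_B + Real.sqrt (1 + N_B)) ^ 2 /
          (Real.sqrt (N_B * N_S) + Real.sqrt ((1 + N_B) * (1 + N_S))) ^ 2 < 4 := by
  set a := Real.sqrt N_B with ha
  set b := Real.sqrt (1 + N_B) with hb
  set s := Real.sqrt N_S with hs
  set t := Real.sqrt (1 + N_S) with ht
  have ha2 : a ^ 2 = N_B := Real.sq_sqrt hNB.le
  have hb2 : b ^ 2 = 1 + N_B := Real.sq_sqrt (by linarith)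
  have hs2 : s ^ 2 = N_S := Real.sq_sqrt hNS.le
  have ht2 : t ^ 2 = 1 + N_S := Real.sq_sqrt (by linarith)
  have hap : 0 < a := Real.sqrt_pos.mpr hNB
  have hbp : 0 < b := Real.sqrt_pos.mpr (by linarith)
  have hsp : 0 < s := Real.sqrt_pos.mpr hNS
  have htp : 0 < t := Real.sqrt_pos.mpr (by linarith)
  have hmul1 : Real.sqrt (N_B * N_S) = a * s := Real.sqrt_mul hNB.le _
  have hmul2 : Real.sqrt ((1 + N_B) * (1 + N_S)) = b * t :=
    Real.sqrt_mul (by linarith) _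
  rw [hmul1, hmul2]
  have hab : a < b := by
    nlinarith
  have hst : s < t := by
    nlinarith
  have hden : 0 < (a * s + b * t) ^ 2 := by positivity
  have h1 : a * s + b * t < t * (a + b) := by nlinarith
  have h2 : t * (a + b) < 2 * (a * s + b * t) := by nlinarith
  have hnum : (1 + N_S) * (a + b) ^ 2 = (t * (a + b)) ^ 2 := by
    rw [mul_pow, ht2]
  constructor
  · rw [lt_div_iff₀ hden, one_mul, hnum]
    have := pow_lt_pow_left₀ h1 (by positivity : (0:ℝ) ≤ a * s + b * t) two_ne_zero
    linarith
  · rw [div_lt_iff₀ hden, hnum]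
    have := pow_lt_pow_left₀ h2 (by positivity : (0:ℝ) ≤ t * (a + b)) two_ne_zero
    nlinarith [this]
end
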